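/- arXiv:2007.02411 — 8 statements merged into one kernel-verified Lean document; each statement's English description precedes it below -/
import Mathlib

section
/- Let ξ be a real-valued random variable with E[max(ξ,0)] < ∞, and let q be its (1-α)-quantile for α ∈ (0,1], i.e. q = inf{t : P(ξ ≤ t) ≥ 1-α}. If ξ has a positive density at q (so that P(ξ ≤ q) = 1-α), then inf over η ∈ ℝ of { (1/α) E[max(ξ - η, 0)] + η } equals E[ξ | ξ ≥ q]. -/
open MeasureTheory Filter Set

/-- CVaR dual representation: the infimum of the dual objective equals the
conditional expectation of `ξ` above its `(1-α)`-quantile. -/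
theorem stmt0
    {Ω : Type*} [MeasurableSpace Ω] (P : Measure Ω) [IsProbabilityMeasure P]
    (ξ : Ω → ℝ) (hmeas : Measurable ξ)
    (hint : Integrable (fun ω => max (ξ ω) 0) P)
    (α : ℝ) (hα : α ∈ Set.Ioc (0:ℝ) 1)
    (q : ℝ) (hq : q = sInf {t : ℝ | 1 - α ≤ (P {ω | ξ ω ≤ t}).toReal})
    (hFq : (P {ω | ξ ω ≤ q}).toReal = 1 - α)
    (hatom : P {ω | ξ ω = q} = 0) :
    (⨅ η : ℝ, (α⁻¹ * ∫ ω, max (ξ ω - η) 0 ∂P + η)) =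
      (∫ ω in {ω | q ≤ ξ ω}, ξ ω ∂P) / (P {ω | q ≤ ξ ω}).toReal := by
  obtain ⟨hα0, hα1⟩ := hα
  have hSq : MeasurableSet {ω | q ≤ ξ ω} := measurableSet_le measurable_const hmeas
  have hSgt : MeasurableSet {ω | q < ξ ω} := measurableSet_lt measurable_const hmeas
  have hSle : MeasurableSet {ω | ξ ω ≤ q} := measurableSet_le hmeas measurable_const
  have hPgt : (P {ω | q < ξ ω}).toReal = α := by
    have hc : {ω | q < ξ ω} = {ω | ξ ω ≤ q}ᶜ := by ext ω; simp [not_le]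
    rw [hc, measure_compl hSle (measure_ne_top _ _), measure_univ,
      ENNReal.toReal_sub_of_le prob_le_one ENNReal.one_ne_top, ENNReal.toReal_one, hFq]
    ring
  have hPge : (P {ω | q ≤ ξ ω}).toReal = α := by
    have h1 : P {ω | q ≤ ξ ω} = P {ω | q < ξ ω} := by
      apply le_antisymm
      · have hsub : {ω | q ≤ ξ ω} ⊆ {ω | q < ξ ω} ∪ {ω | ξ ω = q} := by
          intro ω hω
          simp only [Set.mem_setOf_eq, Set.mem_union] at hω ⊢
          rcases lt_or_eq_of_le hω with h | h
          · exact Or.inl h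
          · exact Or.inr h.symm
        calc P {ω | q ≤ ξ ω} ≤ P ({ω | q < ξ ω} ∪ {ω | ξ ω = q}) := measure_mono hsub
          _ ≤ P {ω | q < ξ ω} + P {ω | ξ ω = q} := measure_union_le _ _
          _ = P {ω | q < ξ ω} := by rw [hatom, add_zero]
      · refine measure_mono fun ω hω => ?_
        simp only [Set.mem_setOf_eq] at hω ⊢
        exact hω.le
    rw [h1, hPgt]
  have hintf : ∀ η : ℝ, Integrable (fun ω => max (ξ ω - η) 0) P := by
    intro η
    refine (hint.add (integrable_const |η|)).mono'
      ((hmeas.sub_const η).max measurable_const).aestronglyMeasurable ?_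
    filter_upwards with ω
    rw [Real.norm_eq_abs, abs_of_nonneg (le_max_right _ _)]
    simp only [Pi.add_apply]
    have h1 := le_max_left (ξ ω) 0
    have h2 := le_max_right (ξ ω) 0
    have h3 := neg_abs_le η
    have h4 := abs_nonneg η
    exact max_le (by linarith) (by linarith)
  have hint2 : IntegrableOn ξ {ω | q ≤ ξ ω} P := by
    refine Integrable.mono' (hint.add (integrable_const |q|)).integrableOn
      hmeas.aestronglyMeasurable.restrict ?_
    rw [ae_restrict_iff' hSq]
    filter_upwards with ω hω
    rw [Real.norm_eq_abs]
    simp only [Pi.add_apply]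
    have h1 := le_max_left (ξ ω) 0
    have h2 := le_max_right (ξ ω) 0
    have h3 := neg_abs_le q
    have h4 := abs_nonneg q
    rcases le_total (ξ ω) 0 with h | h
    · rw [abs_of_nonpos h]; linarith
    · rw [abs_of_nonneg h]; linarith
  set A : ℝ := ∫ ω in {ω | q ≤ ξ ω}, ξ ω ∂P with hA
  have hind : ∀ η : ℝ,
      ∫ ω, ({ω | q ≤ ξ ω}).indicator (fun ω => ξ ω - η) ω ∂P = A - η * α := by
    intro η
    rw [integral_indicator hSq, integral_sub hint2 (integrable_const η).integrableOn,
      setIntegral_const, measureReal_def, hPge, smul_eq_mul]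
    ring
  have hkey : ∀ η : ℝ, α⁻¹ * A ≤ α⁻¹ * ∫ ω, max (ξ ω - η) 0 ∂P + η := by
    intro η
    have hle : ∫ ω, ({ω | q ≤ ξ ω}).indicator (fun ω => ξ ω - η) ω ∂P
        ≤ ∫ ω, max (ξ ω - η) 0 ∂P := by
      apply integral_mono _ (hintf η)
      · intro ω
        by_cases h : ω ∈ {ω | q ≤ ξ ω}
        · rw [Set.indicator_of_mem h]; exact le_max_left _ _
        · rw [Set.indicator_of_notMem h]; exact le_max_right _ _
      · rw [integrable_indicator_iff hSq]
        exact hint2.sub (integrable_const η).integrableOn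
    rw [hind η] at hle
    have h5 : α⁻¹ * (A - η * α) ≤ α⁻¹ * ∫ ω, max (ξ ω - η) 0 ∂P :=
      mul_le_mul_of_nonneg_left hle (inv_nonneg.2 hα0.le)
    have h6 : α⁻¹ * (A - η * α) = α⁻¹ * A - η := by
      field_simp
    linarith
  have hGq : α⁻¹ * ∫ ω, max (ξ ω - q) 0 ∂P + q = α⁻¹ * A := by
    have heq : (fun ω => max (ξ ω - q) 0)
        = ({ω | q ≤ ξ ω}).indicator (fun ω => ξ ω - q) := by
      ext ω
      by_cases h : ω ∈ {ω | q ≤ ξ ω}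
      · rw [Set.indicator_of_mem h, max_eq_left (sub_nonneg.2 h)]
      · rw [Set.indicator_of_notMem h,
          max_eq_right (sub_nonpos.2 (le_of_not_ge h))]
    rw [heq, hind q]
    field_simp
    ring
  have hinf : (⨅ η : ℝ, (α⁻¹ * ∫ ω, max (ξ ω - η) 0 ∂P + η)) = α⁻¹ * A := by
    apply le_antisymm
    · refine le_of_le_of_eq (ciInf_le ⟨α⁻¹ * A, ?_⟩ q) hGq
      rintro x ⟨η, rfl⟩
      exact hkey η
    · exact le_ciInf hkey
  rw [hinf, hPge, div_eq_inv_mul]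
end

section
/- Let ξ be a real random variable with E[max(ξ,0)] < ∞ that has a positive density at its (1-α)-quantile q = inf{t : F_ξ(t) ≥ 1-α}, for α ∈ (0,1). Then the set of minimizers of the convex function η ↦ (1/α) E[max(ξ - η, 0)] + η is exactly the singleton {q}. -/
open MeasureTheory Filter Set
open scoped ENNReal

section aux

variable {Ω : Type*} [MeasurableSpace Ω] (P : Measure Ω) [IsProbabilityMeasure P]
variable (ξ : Ω → ℝ)

lemma cvar_integrable (hmeas : Measurable ξ)
    (hint : Integrable (fun ω => max (ξ ω) 0) P) (a : ℝ) :
    Integrable (fun ω => max (ξ ω - a) 0) P := by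
  refine (hint.add (integrable_const |a|)).mono
    ((hmeas.sub_const a).max measurable_const).aestronglyMeasurable ?_
  filter_upwards with ω
  rw [Real.norm_eq_abs, Real.norm_eq_abs, Pi.add_apply]
  have h0 : (0:ℝ) ≤ max (ξ ω) 0 + |a| := by positivity
  rw [abs_of_nonneg (le_max_right _ _), abs_of_nonneg h0]
  refine max_le ?_ h0
  have h1 := le_max_left (ξ ω) 0
  have h2 := neg_abs_le a
  linarith

lemma cvar_key (hmeas : Measurable ξ)
    (hint : Integrable (fun ω => max (ξ ω) 0) P) {a b : ℝ} (hab : a ≤ b) :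
    (∫ ω, max (ξ ω - a) 0 ∂P) - ∫ ω, max (ξ ω - b) 0 ∂P
      = ∫ t in Set.Ioc a b, (1 - (P {ω | ξ ω ≤ t}).toReal) := by
  set G : ℝ → ℝ≥0∞ := fun t => P {ω | t < ξ ω} with hG
  have hG_anti : Antitone G := by
    intro s t hst
    exact measure_mono (fun ω h => lt_of_le_of_lt hst h)
  have hG_meas : Measurable G := hG_anti.measurable
  -- pointwise identity
  have hpt : ∀ x : ℝ, ENNReal.ofReal (max (x - a) 0 - max (x - b) 0)
      = volume (Set.Ioc a b ∩ Set.Iio x) := by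
    intro x
    rcases le_or_gt x a with h | h
    · have he : Set.Ioc a b ∩ Set.Iio x = ∅ := by
        ext t
        simp only [Set.mem_inter_iff, Set.mem_Ioc, Set.mem_Iio, Set.mem_empty_iff_false,
          iff_false, not_and]
        rintro ⟨h1, h2⟩ h3
        linarith
      rw [he, measure_empty, max_eq_right (by linarith : x - a ≤ 0),
        max_eq_right (by linarith : x - b ≤ 0)]
      simp
    · rcases le_or_gt x b with h2 | h2
      · have he : Set.Ioc a b ∩ Set.Iio x = Set.Ioo a x := by
          ext t
          simp only [Set.mem_inter_iff, Set.mem_Ioc, Set.mem_Iio, Set.mem_Ioo]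
          constructor
          · rintro ⟨⟨h3, h4⟩, h5⟩; exact ⟨h3, h5⟩
          · rintro ⟨h3, h5⟩; exact ⟨⟨h3, by linarith⟩, h5⟩
        rw [he, Real.volume_Ioo, max_eq_left (by linarith : (0:ℝ) ≤ x - a),
          max_eq_right (by linarith : x - b ≤ 0)]
        norm_num
      · have he : Set.Ioc a b ∩ Set.Iio x = Set.Ioc a b := by
          refine Set.inter_eq_left.mpr ?_
          intro t ht
          exact lt_of_le_of_lt ht.2 h2
        rw [he, Real.volume_Ioc, max_eq_left (by linarith : (0:ℝ) ≤ x - a),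
          max_eq_left (by linarith : (0:ℝ) ≤ x - b)]
        congr 1
        ring
  -- the function and its integrability
  have hia := cvar_integrable P ξ hmeas hint a
  have hib := cvar_integrable P ξ hmeas hint b
  have hf_int : Integrable (fun ω => max (ξ ω - a) 0 - max (ξ ω - b) 0) P := hia.sub hib
  have hf_nn : ∀ ω, 0 ≤ max (ξ ω - a) 0 - max (ξ ω - b) 0 := by
    intro ω
    have : max (ξ ω - b) 0 ≤ max (ξ ω - a) 0 := max_le_max (by linarith) le_rfl
    linarith
  -- lintegral computation
  have step1 : ENNReal.ofReal (∫ ω, (max (ξ ω - a) 0 - max (ξ ω - b) 0) ∂P)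
      = ∫⁻ ω, ENNReal.ofReal (max (ξ ω - a) 0 - max (ξ ω - b) 0) ∂P :=
    ofReal_integral_eq_lintegral_ofReal hf_int (ae_of_all _ hf_nn)
  have hSmeas : MeasurableSet {p : Ω × ℝ | p.2 < ξ p.1} :=
    measurableSet_lt measurable_snd (hmeas.comp measurable_fst)
  have step2 : ∫⁻ ω, ENNReal.ofReal (max (ξ ω - a) 0 - max (ξ ω - b) 0) ∂P
      = ∫⁻ t in Set.Ioc a b, G t := by
    have e1 : ∀ ω, ENNReal.ofReal (max (ξ ω - a) 0 - max (ξ ω - b) 0)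
        = ∫⁻ t in Set.Ioc a b, (Set.Iio (ξ ω)).indicator 1 t := by
      intro ω
      rw [hpt (ξ ω), lintegral_indicator_one measurableSet_Iio,
        Measure.restrict_apply measurableSet_Iio, Set.inter_comm]
    simp_rw [e1]
    rw [lintegral_lintegral_swap]
    · refine lintegral_congr fun t => ?_
      have e2 : ∀ ω : Ω, (Set.Iio (ξ ω)).indicator (1 : ℝ → ℝ≥0∞) t
          = ({ω' : Ω | t < ξ ω'}).indicator (1 : Ω → ℝ≥0∞) ω := by
        intro ω
        simp only [Set.indicator_apply, Set.mem_Iio, Set.mem_setOf_eq, Pi.one_apply]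
      simp_rw [e2]
      exact lintegral_indicator_one (measurableSet_lt measurable_const hmeas)
    · have : (Function.uncurry fun ω t => (Set.Iio (ξ ω)).indicator (1 : ℝ → ℝ≥0∞) t)
          = ({p : Ω × ℝ | p.2 < ξ p.1}).indicator 1 := by
        ext p
        simp only [Function.uncurry, Set.indicator_apply, Set.mem_Iio, Set.mem_setOf_eq,
          Pi.one_apply]
      rw [this]
      exact (measurable_one.indicator hSmeas).aemeasurable
  have hG_fin : ∫⁻ t in Set.Ioc a b, G t ≠ ∞ := by
    have hle : ∫⁻ t in Set.Ioc a b, G t ≤ ∫⁻ _ in Set.Ioc a b, 1 :=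
      lintegral_mono fun t => prob_le_one
    rw [setLIntegral_one] at hle
    exact ne_top_of_le_ne_top (by simp [Real.volume_Ioc]) hle
  have step3 : ∫ t in Set.Ioc a b, (G t).toReal
      = (∫⁻ t in Set.Ioc a b, G t).toReal :=
    integral_toReal (hG_meas.aemeasurable.restrict)
      (ae_of_all _ fun t => measure_lt_top P _)
  have hint_sub : (∫ ω, max (ξ ω - a) 0 ∂P) - ∫ ω, max (ξ ω - b) 0 ∂P
      = ∫ ω, (max (ξ ω - a) 0 - max (ξ ω - b) 0) ∂P := (integral_sub hia hib).symm
  have hmain : (∫ ω, max (ξ ω - a) 0 ∂P) - ∫ ω, max (ξ ω - b) 0 ∂P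
      = ∫ t in Set.Ioc a b, (G t).toReal := by
    rw [hint_sub, step3]
    have := step1.trans step2
    rw [← this, ENNReal.toReal_ofReal (integral_nonneg hf_nn)]
  rw [hmain]
  refine setIntegral_congr_fun measurableSet_Ioc fun t _ => ?_
  have hc : {ω | t < ξ ω} = {ω | ξ ω ≤ t}ᶜ := by
    ext ω; simp [not_le]
  show (P {ω | t < ξ ω}).toReal = 1 - (P {ω | ξ ω ≤ t}).toReal
  rw [hc, measure_compl (s := {ω | ξ ω ≤ t}) (hmeas measurableSet_Iic) (measure_ne_top P _),
    measure_univ, ENNReal.toReal_sub_of_le prob_le_one ENNReal.one_ne_top,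
    ENNReal.toReal_one]

lemma cvar_F_mono : Monotone (fun t => (P {ω | ξ ω ≤ t}).toReal) := by
  intro s t hst
  exact ENNReal.toReal_mono (measure_ne_top P _)
    (measure_mono (fun ω h => le_trans h hst))

lemma cvar_F_integrableOn (a b : ℝ) :
    IntegrableOn (fun t => (P {ω | ξ ω ≤ t}).toReal) (Set.Ioc a b) := by
  haveI : IsFiniteMeasure (volume.restrict (Set.Ioc a b)) :=
    ⟨by rw [Measure.restrict_apply_univ]; exact measure_Ioc_lt_top⟩
  refine ⟨((cvar_F_mono P ξ).measurable).aestronglyMeasurable,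
    HasFiniteIntegral.of_bounded (C := 1) (ae_of_all _ fun t => ?_)⟩
  rw [Real.norm_eq_abs, abs_of_nonneg ENNReal.toReal_nonneg]
  calc (P {ω | ξ ω ≤ t}).toReal ≤ (1 : ℝ≥0∞).toReal :=
        ENNReal.toReal_mono ENNReal.one_ne_top prob_le_one
    _ = 1 := ENNReal.toReal_one

lemma cvar_gdiff (hmeas : Measurable ξ)
    (hint : Integrable (fun ω => max (ξ ω) 0) P) {α : ℝ} (hα : 0 < α)
    {a b : ℝ} (hab : a ≤ b) :
    (α⁻¹ * ∫ ω, max (ξ ω - b) 0 ∂P + b) - (α⁻¹ * ∫ ω, max (ξ ω - a) 0 ∂P + a)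
      = α⁻¹ * ∫ t in Set.Ioc a b, ((P {ω | ξ ω ≤ t}).toReal - (1 - α)) := by
  have key := cvar_key P ξ hmeas hint hab
  have hFint := cvar_F_integrableOn P ξ a b
  have e1 : ∫ t in Set.Ioc a b, (1 - (P {ω | ξ ω ≤ t}).toReal)
      = (b - a) - ∫ t in Set.Ioc a b, (P {ω | ξ ω ≤ t}).toReal := by
    rw [integral_sub (integrable_const 1) hFint, setIntegral_const,
      measureReal_def, Real.volume_Ioc, ENNReal.toReal_ofReal (by linarith), smul_eq_mul]
    ring
  have e2 : ∫ t in Set.Ioc a b, ((P {ω | ξ ω ≤ t}).toReal - (1 - α))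
      = (∫ t in Set.Ioc a b, (P {ω | ξ ω ≤ t}).toReal) - (1 - α) * (b - a) := by
    rw [integral_sub hFint (integrable_const _), setIntegral_const,
      measureReal_def, Real.volume_Ioc, ENNReal.toReal_ofReal (by linarith), smul_eq_mul]
    ring
  have e3 : (∫ t in Set.Ioc a b, (P {ω | ξ ω ≤ t}).toReal)
      = (b - a) - ((∫ ω, max (ξ ω - a) 0 ∂P) - ∫ ω, max (ξ ω - b) 0 ∂P) := by
    rw [key, e1]; ring
  rw [e2, e3]
  have hαne : α ≠ 0 := ne_of_gt hα
  field_simp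
  ring

end aux

/-- CVaR minimizer uniqueness: if `ξ` has a positive density at its
`(1-α)`-quantile `q`, the set of minimizers of the CVaR dual objective is `{q}`. -/
theorem stmt1
    {Ω : Type*} [MeasurableSpace Ω] (P : Measure Ω) [IsProbabilityMeasure P]
    (ξ : Ω → ℝ) (hmeas : Measurable ξ)
    (hint : Integrable (fun ω => max (ξ ω) 0) P)
    (α : ℝ) (hα : α ∈ Set.Ioo (0:ℝ) 1)
    (q : ℝ) (hq : q = sInf {t : ℝ | 1 - α ≤ (P {ω | ξ ω ≤ t}).toReal})
    (d : ℝ) (hd : 0 < d)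
    (hderiv : HasDerivAt (fun t => (P {ω | ξ ω ≤ t}).toReal) d q) :
    {η : ℝ | ∀ η' : ℝ,
        α⁻¹ * ∫ ω, max (ξ ω - η) 0 ∂P + η ≤ α⁻¹ * ∫ ω, max (ξ ω - η') 0 ∂P + η'}
      = {q} := by
  obtain ⟨hα0, hα1⟩ := hα
  set F : ℝ → ℝ := fun t => (P {ω | ξ ω ≤ t}).toReal with hF
  have hF_mono : Monotone F := cvar_F_mono P ξ
  set S : Set ℝ := {t : ℝ | 1 - α ≤ F t} with hS
  -- S is nonempty
  have hS_ne : S.Nonempty := by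
    have hmono : Monotone (fun n : ℕ => {ω | ξ ω ≤ (n:ℝ)}) := by
      intro m n hmn ω h
      simp only [Set.mem_setOf_eq] at h ⊢
      exact le_trans h (Nat.cast_le.mpr hmn)
    have h1 : Tendsto (fun n : ℕ => P {ω | ξ ω ≤ (n:ℝ)}) atTop
        (nhds (P (⋃ n : ℕ, {ω | ξ ω ≤ (n:ℝ)}))) :=
      tendsto_measure_iUnion_atTop hmono
    have hu : (⋃ n : ℕ, {ω : Ω | ξ ω ≤ (n:ℝ)}) = Set.univ := by
      ext ω
      simp only [Set.mem_iUnion, Set.mem_setOf_eq, Set.mem_univ, iff_true]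
      exact exists_nat_ge (ξ ω)
    rw [hu, measure_univ] at h1
    have h2 : Tendsto (fun n : ℕ => F (n:ℝ)) atTop (nhds 1) := by
      have := (ENNReal.tendsto_toReal ENNReal.one_ne_top).comp h1
      simpa [hF, Function.comp_def] using this
    have h3 : ∀ᶠ n : ℕ in atTop, 1 - α < F (n:ℝ) :=
      h2.eventually (eventually_gt_nhds (by linarith))
    obtain ⟨n, hn⟩ := h3.exists
    exact ⟨(n:ℝ), le_of_lt hn⟩
  -- S is bounded below
  have hS_bdd : BddBelow S := by
    have hanti : Antitone (fun n : ℕ => {ω | ξ ω ≤ -(n:ℝ)}) := by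
      intro m n hmn ω h
      simp only [Set.mem_setOf_eq] at h ⊢
      have : (m:ℝ) ≤ n := Nat.cast_le.mpr hmn
      linarith
    have h1 : Tendsto (fun n : ℕ => P {ω | ξ ω ≤ -(n:ℝ)}) atTop
        (nhds (P (⋂ n : ℕ, {ω | ξ ω ≤ -(n:ℝ)}))) :=
      tendsto_measure_iInter_atTop
        (fun n => (hmeas measurableSet_Iic).nullMeasurableSet) hanti
        ⟨0, measure_ne_top P _⟩
    have hi : (⋂ n : ℕ, {ω : Ω | ξ ω ≤ -(n:ℝ)}) = ∅ := by
      ext ω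
      simp only [Set.mem_iInter, Set.mem_setOf_eq, Set.mem_empty_iff_false, iff_false, not_forall]
      obtain ⟨n, hn⟩ := exists_nat_gt (-ξ ω)
      exact ⟨n, by push_neg; linarith⟩
    rw [hi, measure_empty] at h1
    have h2 : Tendsto (fun n : ℕ => F (-(n:ℝ))) atTop (nhds 0) := by
      have := (ENNReal.tendsto_toReal ENNReal.zero_ne_top).comp h1
      simpa [hF, Function.comp_def] using this
    have h3 : ∀ᶠ n : ℕ in atTop, F (-(n:ℝ)) < 1 - α :=
      h2.eventually (eventually_lt_nhds (by linarith))
    obtain ⟨n, hn⟩ := h3.exists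
    refine ⟨-(n:ℝ), fun t ht => ?_⟩
    by_contra hlt
    push_neg at hlt
    exact absurd (le_trans ht (hF_mono (le_of_lt hlt))) (not_le.mpr hn)
  -- F t < 1 - α for t < q
  have hFlt : ∀ t, t < q → F t < 1 - α := by
    intro t ht
    by_contra hle
    push_neg at hle
    have : q ≤ t := hq ▸ csInf_le hS_bdd hle
    linarith
  -- F q = 1 - α
  have hcont : ContinuousAt F q := hderiv.continuousAt
  have hFq : F q = 1 - α := by
    have hge : 1 - α ≤ F q := by
      have hev : ∀ t ∈ Set.Ioi q, 1 - α ≤ F t := by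
        intro t ht
        have hlt : sInf S < t := by rw [← hq]; exact ht
        obtain ⟨s, hsS, hst⟩ := (csInf_lt_iff hS_bdd hS_ne).mp hlt
        exact le_trans hsS (hF_mono (le_of_lt hst))
      refine ge_of_tendsto (hcont.tendsto.mono_left nhdsWithin_le_nhds :
        Tendsto F (nhdsWithin q (Set.Ioi q)) (nhds (F q))) ?_
      exact eventually_nhdsWithin_of_forall hev
    have hle : F q ≤ 1 - α := by
      refine le_of_tendsto (hcont.tendsto.mono_left nhdsWithin_le_nhds :
        Tendsto F (nhdsWithin q (Set.Iio q)) (nhds (F q))) ?_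
      exact eventually_nhdsWithin_of_forall (fun t ht => le_of_lt (hFlt t ht))
    linarith
  -- difference formula
  have hdiff : ∀ a b : ℝ, a ≤ b →
      (α⁻¹ * ∫ ω, max (ξ ω - b) 0 ∂P + b) - (α⁻¹ * ∫ ω, max (ξ ω - a) 0 ∂P + a)
        = α⁻¹ * ∫ t in Set.Ioc a b, (F t - (1 - α)) :=
    fun a b hab => cvar_gdiff P ξ hmeas hint hα0 hab
  have hαinv : (0:ℝ) < α⁻¹ := inv_pos.mpr hα0
  ext η
  simp only [Set.mem_setOf_eq, Set.mem_singleton_iff]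
  constructor
  · -- a minimizer must equal q
    intro hmin
    by_contra hne
    rcases lt_or_gt_of_ne hne with hlt | hgt
    · -- η < q : strictly better at q... contradiction with minimality at η? No:
      -- g q > g η is fine for minimality of η; we need g q < g η to contradict hmin q.
      have hpos : 0 < ∫ t in Set.Ioc η q, ((1 - α) - F t) := by
        rw [setIntegral_pos_iff_support_of_nonneg_ae]
        · have hsub2 : Set.Ioo η q ⊆
              (Function.support fun t => 1 - α - F t) ∩ Set.Ioc η q := by
            intro t ht
            refine ⟨?_, ht.1, ht.2.le⟩
            simp only [Function.mem_support]
            intro h0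
            rw [sub_eq_zero] at h0
            have := hFlt t ht.2
            linarith
          refine lt_of_lt_of_le ?_ (measure_mono hsub2)
          rw [Real.volume_Ioo]
          simpa using sub_pos.mpr hlt
        · refine ae_restrict_of_forall_mem measurableSet_Ioc fun t ht => ?_
          have : F t ≤ F q := hF_mono ht.2
          simp only [Pi.zero_apply]
          linarith [hFq ▸ this]
        · exact (integrable_const _).sub (cvar_F_integrableOn P ξ η q)
      have hneg : ∫ t in Set.Ioc η q, (F t - (1 - α)) < 0 := by
        have : ∫ t in Set.Ioc η q, ((1 - α) - F t)
            = - ∫ t in Set.Ioc η q, (F t - (1 - α)) := by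
          rw [← integral_neg]
          congr 1
          ext t
          ring
        linarith [this ▸ hpos]
      have hd1 := hdiff η q (le_of_lt hlt)
      have hq_lt : (α⁻¹ * ∫ ω, max (ξ ω - q) 0 ∂P + q)
          < α⁻¹ * ∫ ω, max (ξ ω - η) 0 ∂P + η := by
        nlinarith [hd1, mul_pos hαinv (neg_pos.mpr hneg)]
      exact absurd (hmin q) (not_le.mpr hq_lt)
    · -- q < η
      have hnn : ∀ t ∈ Set.Ioc q η, 0 ≤ F t - (1 - α) := by
        intro t ht
        have := hF_mono (le_of_lt ht.1)
        rw [hFq] at this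
        linarith
      -- strict positivity near q from the derivative
      have hslope : Tendsto (slope F q) (nhdsWithin q {q}ᶜ) (nhds d) :=
        hasDerivAt_iff_tendsto_slope.mp hderiv
      have hslope' : ∀ᶠ t in nhdsWithin q (Set.Ioi q), d / 2 < slope F q t := by
        refine (hslope.mono_left (nhdsWithin_mono q ?_)).eventually
          (eventually_gt_nhds (by linarith))
        intro t ht
        exact ne_of_gt ht
      obtain ⟨u, hu, hsub⟩ := mem_nhdsGT_iff_exists_Ioc_subset.mp hslope'
      set v := min u η with hv
      have hqv : q < v := lt_min hu hgt
      have hFgt : ∀ t ∈ Set.Ioo q v, 0 < F t - (1 - α) := by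
        intro t ht
        have ht1 : t ∈ Set.Ioc q u := ⟨ht.1, le_of_lt (lt_of_lt_of_le ht.2 (min_le_left _ _))⟩
        have hs := hsub ht1
        simp only [Set.mem_setOf_eq] at hs
        have htq : 0 < t - q := sub_pos.mpr ht.1
        rw [slope_def_field, lt_div_iff₀ htq] at hs
        have hd2 : 0 < d / 2 * (t - q) := by positivity
        rw [hFq] at hs
        linarith
      have hpos : 0 < ∫ t in Set.Ioc q η, (F t - (1 - α)) := by
        rw [setIntegral_pos_iff_support_of_nonneg_ae]
        · have hsub2 : Set.Ioo q v ⊆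
              (Function.support fun t => F t - (1 - α)) ∩ Set.Ioc q η := by
            intro t ht
            exact ⟨ne_of_gt (hFgt t ht), ht.1,
              le_trans (le_of_lt ht.2) (min_le_right _ _)⟩
          refine lt_of_lt_of_le ?_ (measure_mono hsub2)
          rw [Real.volume_Ioo]
          simpa using sub_pos.mpr hqv
        · exact ae_restrict_of_forall_mem measurableSet_Ioc fun t ht => hnn t ht
        · exact (cvar_F_integrableOn P ξ q η).sub (integrable_const _)
      have hd1 := hdiff q η (le_of_lt hgt)
      have hq_lt : (α⁻¹ * ∫ ω, max (ξ ω - q) 0 ∂P + q)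
          < α⁻¹ * ∫ ω, max (ξ ω - η) 0 ∂P + η := by
        nlinarith [hd1, mul_pos hαinv hpos]
      exact absurd (hmin q) (not_le.mpr hq_lt)
  · -- q is a minimizer
    rintro rfl
    intro η'
    rcases le_total η' η with h | h
    · have hd1 := hdiff η' η h
      have hnp : ∫ t in Set.Ioc η' η, (F t - (1 - α)) ≤ 0 := by
        refine setIntegral_nonpos measurableSet_Ioc fun t ht => ?_
        have := hF_mono ht.2
        rw [hFq] at this
        linarith
      nlinarith [hd1, mul_nonneg hαinv.le (neg_nonneg.mpr hnp)]
    · have hd1 := hdiff η η' h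
      have hnp : 0 ≤ ∫ t in Set.Ioc η η', (F t - (1 - α)) := by
        refine setIntegral_nonneg measurableSet_Ioc fun t ht => ?_
        have := hF_mono ht.1.le
        rw [hFq] at this
        linarith
      nlinarith [hd1, mul_nonneg hαinv.le hnp]
end

section
/- For a real random variable ξ with E[max(ξ,0)] < ∞ and α ∈ (0,1), a point η* minimizes g(η) = (1/α) E[max(ξ - η, 0)] + η if and only if F_ξ(η*) - (1-α) ∈ [0, P(ξ = η*)], where F_ξ(t) = P(ξ ≤ t). -/
open MeasureTheory Filter Set

section cvarAux
variable {Ω : Type*} [MeasurableSpace Ω] (P : Measure Ω) [IsProbabilityMeasure P]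
  (ξ : Ω → ℝ) (hmeas : Measurable ξ)
  (hint : Integrable (fun ω => max (ξ ω) 0) P)

include hmeas hint

lemma cvar_int (η : ℝ) : Integrable (fun ω => max (ξ ω - η) 0) P := by
  refine (hint.add (integrable_const |η|)).mono'
    (((hmeas.sub measurable_const).max measurable_const).aestronglyMeasurable) ?_
  filter_upwards with ω
  simp only [Pi.add_apply]
  rw [Real.norm_eq_abs, abs_of_nonneg (le_max_right _ _)]
  rcases le_or_gt (ξ ω - η) 0 with h | h
  · rw [max_eq_right h]; positivity
  · rw [max_eq_left h.le]
    have h1 : ξ ω ≤ max (ξ ω) 0 := le_max_left _ _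
    have h2 : -|η| ≤ η := neg_abs_le η
    linarith

lemma cvar_key_s2 {a b : ℝ} (hab : a < b) :
    (b - a) * (P {ω | b ≤ ξ ω}).toReal
        ≤ (∫ ω, max (ξ ω - a) 0 ∂P) - ∫ ω, max (ξ ω - b) 0 ∂P
    ∧ (∫ ω, max (ξ ω - a) 0 ∂P) - ∫ ω, max (ξ ω - b) 0 ∂P
        ≤ (b - a) * (P {ω | a < ξ ω}).toReal := by
  have hIa := cvar_int P ξ hmeas hint a
  have hIb := cvar_int P ξ hmeas hint b
  have hms1 : MeasurableSet {ω | b ≤ ξ ω} := measurableSet_le measurable_const hmeas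
  have hms2 : MeasurableSet {ω | a < ξ ω} := measurableSet_lt measurable_const hmeas
  rw [← integral_sub hIa hIb]
  constructor
  · calc (b - a) * (P {ω | b ≤ ξ ω}).toReal
        = ∫ ω, ({ω | b ≤ ξ ω}).indicator (fun _ => b - a) ω ∂P := by
          rw [integral_indicator_const _ hms1, smul_eq_mul, mul_comm, measureReal_def]
      _ ≤ ∫ ω, (max (ξ ω - a) 0 - max (ξ ω - b) 0) ∂P := by
          refine integral_mono ((integrable_const _).indicator hms1) (hIa.sub hIb) ?_
          intro ω
          rw [Set.indicator_apply]
          simp only [Set.mem_setOf_eq]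
          split_ifs with h
          · rw [max_eq_left (by linarith), max_eq_left (by linarith)]
            linarith
          · push_neg at h
            rw [max_eq_right (by linarith : ξ ω - b ≤ 0)]
            have := le_max_right (ξ ω - a) 0
            linarith
  · calc ∫ ω, (max (ξ ω - a) 0 - max (ξ ω - b) 0) ∂P
        ≤ ∫ ω, ({ω | a < ξ ω}).indicator (fun _ => b - a) ω ∂P := by
          refine integral_mono (hIa.sub hIb) ((integrable_const _).indicator hms2) ?_
          intro ω
          rw [Set.indicator_apply]
          simp only [Set.mem_setOf_eq]
          split_ifs with h
          · rcases le_or_gt (ξ ω) b with h2 | h2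
            · rw [max_eq_right (by linarith : ξ ω - b ≤ 0)]
              rcases le_or_gt (ξ ω - a) 0 with h3 | h3
              · rw [max_eq_right h3]; linarith
              · rw [max_eq_left h3.le]; linarith
            · rw [max_eq_left (by linarith), max_eq_left (by linarith)]; linarith
          · push_neg at h
            rw [max_eq_right (by linarith : ξ ω - a ≤ 0),
                max_eq_right (by linarith : ξ ω - b ≤ 0)]
            linarith
      _ = (b - a) * (P {ω | a < ξ ω}).toReal := by
          rw [integral_indicator_const _ hms2, smul_eq_mul, mul_comm, measureReal_def]

omit hint

lemma cvar_lim_gt {α : ℝ} (hα0 : 0 < α) (c : ℝ)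
    (hall : ∀ ε : ℝ, 0 < ε → (P {ω | c + ε ≤ ξ ω}).toReal ≤ α) :
    (P {ω | c < ξ ω}).toReal ≤ α := by
  have hsets : {ω | c < ξ ω} = ⋃ n : ℕ, {ω | c + 1/(n+1) ≤ ξ ω} := by
    ext ω
    simp only [mem_setOf_eq, mem_iUnion]
    constructor
    · intro h
      obtain ⟨n, hn⟩ := exists_nat_one_div_lt (sub_pos.mpr h)
      exact ⟨n, by linarith⟩
    · rintro ⟨n, hn⟩
      have : (0:ℝ) < 1/(n+1) := by positivity
      linarith
  have hmono : Monotone fun n : ℕ => {ω | c + 1/((n:ℝ)+1) ≤ ξ ω} := by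
    intro m n hmn ω hω
    simp only [mem_setOf_eq] at hω ⊢
    have h1 : (1:ℝ)/((n:ℝ)+1) ≤ 1/((m:ℝ)+1) := by
      apply one_div_le_one_div_of_le (by positivity)
      exact_mod_cast by omega
    linarith
  rw [hsets, hmono.directed_le.measure_iUnion]
  refine ENNReal.toReal_le_of_le_ofReal hα0.le (iSup_le fun n => ?_)
  exact (ENNReal.le_ofReal_iff_toReal_le (measure_ne_top P _) hα0.le).mpr
    (hall _ (by positivity))

lemma cvar_lim_ge {α : ℝ} (c : ℝ)
    (hall : ∀ ε : ℝ, 0 < ε → α ≤ (P {ω | c - ε < ξ ω}).toReal) :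
    α ≤ (P {ω | c ≤ ξ ω}).toReal := by
  have hsets : {ω | c ≤ ξ ω} = ⋂ n : ℕ, {ω | c - 1/(n+1) < ξ ω} := by
    ext ω
    simp only [mem_setOf_eq, mem_iInter]
    constructor
    · intro h n
      have : (0:ℝ) < 1/(n+1) := by positivity
      linarith
    · intro h
      by_contra hc
      push_neg at hc
      obtain ⟨n, hn⟩ := exists_nat_one_div_lt (sub_pos.mpr hc)
      have := h n
      linarith
  have hanti : Antitone fun n : ℕ => {ω | c - 1/((n:ℝ)+1) < ξ ω} := by
    intro m n hmn ω hω
    simp only [mem_setOf_eq] at hω ⊢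
    have h1 : (1:ℝ)/((n:ℝ)+1) ≤ 1/((m:ℝ)+1) := by
      apply one_div_le_one_div_of_le (by positivity)
      exact_mod_cast by omega
    linarith
  rw [hsets, Directed.measure_iInter
    (fun n => (measurableSet_lt measurable_const hmeas).nullMeasurableSet)
    hanti.directed_ge ⟨0, measure_ne_top P _⟩]
  refine (ENNReal.ofReal_le_iff_le_toReal ?_).mp (le_iInf fun n => ?_)
  · exact ne_top_of_le_ne_top (measure_ne_top P _) (iInf_le _ 0)
  · exact (ENNReal.ofReal_le_iff_le_toReal (measure_ne_top P _)).mpr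
      (hall _ (by positivity))

lemma cvar_split1 (ηs : ℝ) :
    (P {ω | ξ ω ≤ ηs}).toReal + (P {ω | ηs < ξ ω}).toReal = 1 := by
  have hc : {ω | ξ ω ≤ ηs}ᶜ = {ω | ηs < ξ ω} := by ext ω; simp [not_le]
  have h := measure_add_measure_compl (μ := P) (s := {ω | ξ ω ≤ ηs})
    (measurableSet_le hmeas measurable_const)
  rw [hc, measure_univ] at h
  have h2 := congrArg ENNReal.toReal h
  rwa [ENNReal.toReal_add (measure_ne_top P _) (measure_ne_top P _), ENNReal.toReal_one]
    at h2

lemma cvar_split2 (ηs : ℝ) :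
    (P {ω | ξ ω < ηs}).toReal + (P {ω | ηs ≤ ξ ω}).toReal = 1 := by
  have hc : {ω | ξ ω < ηs}ᶜ = {ω | ηs ≤ ξ ω} := by ext ω; simp [not_lt]
  have h := measure_add_measure_compl (μ := P) (s := {ω | ξ ω < ηs})
    (measurableSet_lt hmeas measurable_const)
  rw [hc, measure_univ] at h
  have h2 := congrArg ENNReal.toReal h
  rwa [ENNReal.toReal_add (measure_ne_top P _) (measure_ne_top P _), ENNReal.toReal_one]
    at h2

lemma cvar_split3 (ηs : ℝ) :
    (P {ω | ξ ω ≤ ηs}).toReal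
      = (P {ω | ξ ω < ηs}).toReal + (P {ω | ξ ω = ηs}).toReal := by
  have hu : {ω | ξ ω ≤ ηs} = {ω | ξ ω < ηs} ∪ {ω | ξ ω = ηs} := by
    ext ω; simp only [mem_setOf_eq, mem_union]; exact le_iff_lt_or_eq
  have hd : Disjoint {ω | ξ ω < ηs} {ω | ξ ω = ηs} := by
    rw [Set.disjoint_left]
    intro ω h1 h2
    simp only [mem_setOf_eq] at h1 h2
    exact absurd h2 (ne_of_lt h1)
  rw [hu, measure_union hd (hmeas (measurableSet_singleton ηs)),
    ENNReal.toReal_add (measure_ne_top P _) (measure_ne_top P _)]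

end cvarAux

/-- First-order optimality condition for the CVaR dual objective:
`η*` minimizes `g(η) = (1/α) E[(ξ-η)₊] + η` iff
`F_ξ(η*) - (1-α) ∈ [0, P(ξ = η*)]`. -/
theorem stmt2
    {Ω : Type*} [MeasurableSpace Ω] (P : Measure Ω) [IsProbabilityMeasure P]
    (ξ : Ω → ℝ) (hmeas : Measurable ξ)
    (hint : Integrable (fun ω => max (ξ ω) 0) P)
    (α : ℝ) (hα : α ∈ Set.Ioo (0:ℝ) 1)
    (ηs : ℝ) :
    (∀ η : ℝ,
        α⁻¹ * ∫ ω, max (ξ ω - ηs) 0 ∂P + ηs ≤ α⁻¹ * ∫ ω, max (ξ ω - η) 0 ∂P + η)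
      ↔ (0 ≤ (P {ω | ξ ω ≤ ηs}).toReal - (1 - α) ∧
         (P {ω | ξ ω ≤ ηs}).toReal - (1 - α) ≤ (P {ω | ξ ω = ηs}).toReal) := by
  obtain ⟨hα0, hα1⟩ := hα
  have hone := cvar_split1 P ξ hmeas ηs
  have htwo := cvar_split2 P ξ hmeas ηs
  have hthree := cvar_split3 P ξ hmeas ηs
  constructor
  · intro hmin
    have hgt : (P {ω | ηs < ξ ω}).toReal ≤ α := by
      refine cvar_lim_gt P ξ hmeas hα0 ηs fun ε hε => ?_
      have key := (cvar_key_s2 P ξ hmeas hint (show ηs < ηs + ε by linarith)).1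
      rw [add_sub_cancel_left] at key
      have h5 : α⁻¹ * ((∫ ω, max (ξ ω - ηs) 0 ∂P) - ∫ ω, max (ξ ω - (ηs + ε)) 0 ∂P)
          ≤ ε := by
        have := hmin (ηs + ε)
        rw [mul_sub]
        linarith
      have h7 : (∫ ω, max (ξ ω - ηs) 0 ∂P) - ∫ ω, max (ξ ω - (ηs + ε)) 0 ∂P ≤ α * ε := by
        have h6 := mul_le_mul_of_nonneg_left h5 hα0.le
        rwa [← mul_assoc, mul_inv_cancel₀ hα0.ne', one_mul] at h6
      nlinarith [ENNReal.toReal_nonneg (a := P {ω | ηs + ε ≤ ξ ω})]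
    have hge : α ≤ (P {ω | ηs ≤ ξ ω}).toReal := by
      refine cvar_lim_ge P ξ hmeas ηs fun ε hε => ?_
      have key := (cvar_key_s2 P ξ hmeas hint (show ηs - ε < ηs by linarith)).2
      rw [sub_sub_cancel] at key
      have h5 : ε ≤ α⁻¹ * ((∫ ω, max (ξ ω - (ηs - ε)) 0 ∂P) - ∫ ω, max (ξ ω - ηs) 0 ∂P)
          := by
        have := hmin (ηs - ε)
        rw [mul_sub]
        linarith
      have h7 : α * ε ≤ (∫ ω, max (ξ ω - (ηs - ε)) 0 ∂P) - ∫ ω, max (ξ ω - ηs) 0 ∂P := by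
        have h6 := mul_le_mul_of_nonneg_left h5 hα0.le
        rwa [← mul_assoc, mul_inv_cancel₀ hα0.ne', one_mul] at h6
      nlinarith
    constructor
    · linarith
    · linarith
  · rintro ⟨h1, h2⟩ η
    have hgt : (P {ω | ηs < ξ ω}).toReal ≤ α := by linarith
    have hge : α ≤ (P {ω | ηs ≤ ξ ω}).toReal := by linarith
    rcases lt_trichotomy η ηs with hlt | heq | hgt2
    · have key := (cvar_key_s2 P ξ hmeas hint hlt).1
      have hA : α * (ηs - η) ≤ (∫ ω, max (ξ ω - η) 0 ∂P) - ∫ ω, max (ξ ω - ηs) 0 ∂P := by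
        nlinarith [mul_le_mul_of_nonneg_left hge (by linarith : (0:ℝ) ≤ ηs - η)]
      have hB := mul_le_mul_of_nonneg_left hA (inv_nonneg.mpr hα0.le)
      rw [← mul_assoc, inv_mul_cancel₀ hα0.ne', one_mul, mul_sub] at hB
      linarith
    · rw [heq]
    · have key := (cvar_key_s2 P ξ hmeas hint hgt2).2
      have hA : (∫ ω, max (ξ ω - ηs) 0 ∂P) - ∫ ω, max (ξ ω - η) 0 ∂P ≤ α * (η - ηs) := by
        nlinarith [mul_le_mul_of_nonneg_left hgt (by linarith : (0:ℝ) ≤ η - ηs)]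
      have hB := mul_le_mul_of_nonneg_left hA (inv_nonneg.mpr hα0.le)
      rw [← mul_assoc, inv_mul_cancel₀ hα0.ne', one_mul, mul_sub] at hB
      linarith
end

section
/- Let P be a probability distribution on a covariate space X and α ∈ (0,1]. Define Q_α as the set of probability measures Q such that P = a Q + (1-a) Q' for some a ≥ α and some probability measure Q'. Then Q_α equals the set of probability measures Q absolutely continuous with respect to P whose density dQ/dP satisfies 0 ≤ dQ/dP ≤ 1/α P-almost surely. -/
open MeasureTheory Filter Set

/-- The set of α-subpopulations (mixture components of weight at least α) of `P`
equals the set of probability measures absolutely continuous w.r.t. `P` with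
density bounded by `1/α`. -/
theorem stmt3
    {X : Type*} [MeasurableSpace X] (P : Measure X) [IsProbabilityMeasure P]
    (α : ℝ) (hα : α ∈ Set.Ioc (0:ℝ) 1) :
    {Q : Measure X | IsProbabilityMeasure Q ∧
        ∃ a : ℝ, α ≤ a ∧ a ≤ 1 ∧ ∃ Q' : Measure X, IsProbabilityMeasure Q' ∧
          P = ENNReal.ofReal a • Q + ENNReal.ofReal (1 - a) • Q'}
      = {Q : Measure X | IsProbabilityMeasure Q ∧ Q ≪ P ∧
          ∀ᵐ x ∂P, Q.rnDeriv P x ≤ ENNReal.ofReal (1 / α)} := by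
  obtain ⟨hα0, hα1⟩ := hα
  ext Q
  simp only [Set.mem_setOf_eq]
  constructor
  · rintro ⟨hQ, a, haα, ha1, Q', hQ', hP⟩
    have ha0 : 0 < a := lt_of_lt_of_le hα0 haα
    have haa : ENNReal.ofReal a ≠ 0 := by
      simp [ENNReal.ofReal_eq_zero, not_le, ha0]
    refine ⟨hQ, ?_, ?_⟩
    · -- absolute continuity
      intro s hs
      rw [hP] at hs
      simp only [Measure.coe_add, Pi.add_apply, Measure.coe_smul, Pi.smul_apply,
        smul_eq_mul, add_eq_zero, mul_eq_zero] at hs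
      rcases hs.1 with h | h
      · exact absurd h haa
      · exact h
    · -- density bound
      have hle : ENNReal.ofReal a • Q ≤ P := by
        rw [hP]; exact Measure.le_add_right le_rfl
      have h1 : (ENNReal.ofReal a • Q).rnDeriv P ≤ᵐ[P] 1 :=
        Measure.rnDeriv_le_one_of_le hle
      have h2 : (ENNReal.ofReal a • Q).rnDeriv P =ᵐ[P]
          ENNReal.ofReal a • Q.rnDeriv P :=
        Measure.rnDeriv_smul_left_of_ne_top Q P ENNReal.ofReal_ne_top
      filter_upwards [h1, h2] with x hx1 hx2
      have hmul : ENNReal.ofReal a * Q.rnDeriv P x ≤ 1 := by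
        have := hx1
        rw [hx2] at this
        simpa using this
      have : Q.rnDeriv P x ≤ 1 / ENNReal.ofReal a := by
        rw [ENNReal.le_div_iff_mul_le (Or.inl haa) (Or.inl ENNReal.ofReal_ne_top),
          mul_comm]
        exact hmul
      refine this.trans ?_
      rw [one_div, ← ENNReal.ofReal_inv_of_pos ha0, one_div]
      exact ENNReal.ofReal_le_ofReal (by
        exact inv_anti₀ hα0 haα)
  · rintro ⟨hQ, hac, hbd⟩
    set f := Q.rnDeriv P with hf_def
    have hf : Measurable f := Measure.measurable_rnDeriv _ _
    have hQf : P.withDensity f = Q := Measure.withDensity_rnDeriv_eq Q P hac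
    have hint : ∫⁻ x, f x ∂P = 1 := by
      rw [Measure.lintegral_rnDeriv hac, measure_univ]
    refine ⟨hQ, ?_⟩
    rcases eq_or_lt_of_le hα1 with hα1' | hα1'
    · -- α = 1 : then Q = P
      subst hα1'
      have hbd1 : f ≤ᵐ[P] 1 := by
        filter_upwards [hbd] with x hx
        simpa using hx
      have hfeq : f =ᵐ[P] 1 := by
        refine ae_eq_of_ae_le_of_lintegral_le hbd1 (by rw [hint]; exact ENNReal.one_ne_top) ?_ ?_
        · exact measurable_one.aemeasurable
        · simp [hint]
      have hQP : Q = P := by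
        rw [← hQf, withDensity_congr_ae hfeq, withDensity_one]
      refine ⟨1, hα1, le_rfl, Q, hQ, ?_⟩
      simp [hQP]
    · -- α < 1
      have hαne : ENNReal.ofReal (1 - α) ≠ 0 := by
        simp [ENNReal.ofReal_eq_zero, not_le, sub_pos, hα1']
      have hαnetop : ENNReal.ofReal (1 - α) ≠ ⊤ := ENNReal.ofReal_ne_top
      set g : X → ENNReal := fun x => 1 - ENNReal.ofReal α * f x with hg_def
      have hg : Measurable g := measurable_const.sub (hf.const_mul _)
      have hae : ∀ᵐ x ∂P, ENNReal.ofReal α * f x ≤ 1 := by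
        filter_upwards [hbd] with x hx
        calc ENNReal.ofReal α * f x ≤ ENNReal.ofReal α * ENNReal.ofReal (1 / α) :=
              mul_le_mul_right hx _
          _ = ENNReal.ofReal (α * (1 / α)) := (ENNReal.ofReal_mul hα0.le).symm
          _ = 1 := by rw [mul_one_div_cancel hα0.ne', ENNReal.ofReal_one]
      have hintαf : ∫⁻ x, ENNReal.ofReal α * f x ∂P = ENNReal.ofReal α := by
        rw [lintegral_const_mul _ hf, hint, mul_one]
      have hintg : ∫⁻ x, g x ∂P = ENNReal.ofReal (1 - α) := by
        have := lintegral_sub (hf.const_mul (ENNReal.ofReal α))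
          (by rw [hintαf]; exact ENNReal.ofReal_ne_top) hae
        simp only [hg_def]
        rw [this, hintαf, lintegral_one, measure_univ,
          ENNReal.ofReal_sub 1 hα0.le, ENNReal.ofReal_one]
      set Q' : Measure X := (ENNReal.ofReal (1 - α))⁻¹ • P.withDensity g with hQ'_def
      have hQ'prob : IsProbabilityMeasure Q' := by
        constructor
        rw [hQ'_def]
        simp only [Measure.coe_smul, Pi.smul_apply, smul_eq_mul]
        rw [withDensity_apply _ MeasurableSet.univ, setLIntegral_univ, hintg,
          ENNReal.inv_mul_cancel hαne hαnetop]
      refine ⟨α, le_rfl, hα1, Q', hQ'prob, ?_⟩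
      have hsplit : ENNReal.ofReal (1 - α) • Q' = P.withDensity g := by
        rw [hQ'_def, smul_smul, ENNReal.mul_inv_cancel hαne hαnetop, one_smul]
      have hsmulQ : ENNReal.ofReal α • Q = P.withDensity (fun x => ENNReal.ofReal α * f x) := by
        rw [← hQf, ← withDensity_smul _ hf]
        rfl
      rw [hsplit, hsmulQ, ← withDensity_add_left (hf.const_mul _)]
      have : ((fun x => ENNReal.ofReal α * f x) + g) =ᵐ[P] fun _ => 1 := by
        filter_upwards [hae] with x hx
        simp only [hg_def, Pi.add_apply]
        exact add_tsub_cancel_of_le hx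
      rw [withDensity_congr_ae this]
      simp [withDensity_const]
end

section
/- Let F_n, F : ℝ → ℝ be CDFs of random variables ξ_n, ξ with ‖ξ_n - ξ‖_∞ ≤ δ_n → 0 (as random variables on a common probability space), and suppose F is differentiable at its (1-α)-quantile q with F'(q) > 0. Then the (1-α)-quantiles q_n of ξ_n satisfy |q_n - q| = O(δ_n). -/
open MeasureTheory Filter Set Asymptotics

lemma quantile_set_aux {Ω : Type*} [MeasurableSpace Ω] (P : Measure Ω) [IsProbabilityMeasure P]
    (ξ : Ω → ℝ) (hξ : Measurable ξ) (c : ℝ) (hc0 : 0 < c) (hc1 : c < 1) :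
    ({t : ℝ | c ≤ (P {ω | ξ ω ≤ t}).toReal}).Nonempty ∧
    BddBelow {t : ℝ | c ≤ (P {ω | ξ ω ≤ t}).toReal} := by
  set μ : Measure ℝ := P.map ξ with hμ
  have hμprob : IsProbabilityMeasure μ := Measure.isProbabilityMeasure_map hξ.aemeasurable
  have hF : ∀ t, (P {ω | ξ ω ≤ t}).toReal = ProbabilityTheory.cdf μ t := by
    intro t
    rw [ProbabilityTheory.cdf_eq_real, hμ, measureReal_def, Measure.map_apply hξ measurableSet_Iic]
    rfl
  have hmono : Monotone (ProbabilityTheory.cdf μ) := (ProbabilityTheory.cdf μ).mono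
  constructor
  · have h1 := ProbabilityTheory.tendsto_cdf_atTop μ
    have : ∀ᶠ t in atTop, c < ProbabilityTheory.cdf μ t :=
      h1.eventually (eventually_gt_nhds hc1)
    obtain ⟨t, ht⟩ := this.exists
    exact ⟨t, by rw [mem_setOf_eq, hF]; exact ht.le⟩
  · have h0 := ProbabilityTheory.tendsto_cdf_atBot μ
    have : ∀ᶠ t in atBot, ProbabilityTheory.cdf μ t < c :=
      h0.eventually (eventually_lt_nhds hc0)
    obtain ⟨t0, ht0⟩ := this.exists
    refine ⟨t0, fun t ht ↦ ?_⟩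
    rw [mem_setOf_eq, hF] at ht
    by_contra h
    push_neg at h
    exact absurd (ht.trans (hmono h.le)) (not_le.2 ht0)

/-- Quantile stability under uniform perturbation: if `‖ξ_n - ξ‖_∞ ≤ δ_n → 0`
and the CDF of `ξ` has a positive derivative at its `(1-α)`-quantile `q`, then
the `(1-α)`-quantiles `q_n` of `ξ_n` satisfy `|q_n - q| = O(δ_n)`. -/
theorem stmt8
    {Ω : Type*} [MeasurableSpace Ω] (P : Measure Ω) [IsProbabilityMeasure P]
    (ξ : Ω → ℝ) (ξn : ℕ → Ω → ℝ)
    (hξ : Measurable ξ) (hξn : ∀ n, Measurable (ξn n))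
    (δ : ℕ → ℝ) (hδpos : ∀ n, 0 ≤ δ n) (hδ : Tendsto δ atTop (nhds 0))
    (hbd : ∀ n, ∀ ω, |ξn n ω - ξ ω| ≤ δ n)
    (α : ℝ) (hα : α ∈ Set.Ioo (0:ℝ) 1)
    (q : ℝ) (hq : q = sInf {t : ℝ | 1 - α ≤ (P {ω | ξ ω ≤ t}).toReal})
    (qn : ℕ → ℝ)
    (hqn : ∀ n, qn n = sInf {t : ℝ | 1 - α ≤ (P {ω | ξn n ω ≤ t}).toReal})
    (d : ℝ) (hd : 0 < d)
    (hderiv : HasDerivAt (fun t => (P {ω | ξ ω ≤ t}).toReal) d q) :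
    (fun n => qn n - q) =O[atTop] δ := by
  have hc0 : (0:ℝ) < 1 - α := by linarith [hα.2]
  have hc1 : (1:ℝ) - α < 1 := by linarith [hα.1]
  have hFle : ∀ (A B : Set Ω), A ⊆ B → (P A).toReal ≤ (P B).toReal := fun A B h =>
    ENNReal.toReal_mono (measure_ne_top P B) (measure_mono h)
  have key : ∀ n, |qn n - q| ≤ δ n := by
    intro n
    set S := {t : ℝ | 1 - α ≤ (P {ω | ξ ω ≤ t}).toReal} with hS
    set Sn := {t : ℝ | 1 - α ≤ (P {ω | ξn n ω ≤ t}).toReal} with hSn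
    obtain ⟨hSne, hSbdd⟩ := quantile_set_aux P ξ hξ (1 - α) hc0 hc1
    obtain ⟨hSnne, hSnbdd⟩ := quantile_set_aux P (ξn n) (hξn n) (1 - α) hc0 hc1
    have hsub1 : ∀ t ∈ S, t + δ n ∈ Sn := by
      intro t ht
      refine le_trans ht (hFle _ _ fun ω hω ↦ ?_)
      have h1 := (abs_le.1 (hbd n ω)).2
      simp only [mem_setOf_eq] at hω ⊢
      linarith
    have hsub2 : ∀ t ∈ Sn, t + δ n ∈ S := by
      intro t ht
      refine le_trans ht (hFle _ _ fun ω hω ↦ ?_)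
      have h2 := (abs_le.1 (hbd n ω)).1
      simp only [mem_setOf_eq] at hω ⊢
      linarith
    have h1 : qn n - δ n ≤ q := by
      rw [hq]
      refine le_csInf hSne fun t ht ↦ ?_
      have := csInf_le hSnbdd (hsub1 t ht)
      rw [← hqn n] at this
      linarith
    have h2 : q - δ n ≤ qn n := by
      rw [hqn n]
      refine le_csInf hSnne fun t ht ↦ ?_
      have := csInf_le hSbdd (hsub2 t ht)
      rw [← hq] at this
      linarith
    rw [abs_le]
    constructor <;> linarith
  refine isBigO_of_le atTop fun n ↦ ?_
  rw [Real.norm_eq_abs, Real.norm_eq_abs, abs_of_nonneg (hδpos n)]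
  exact key n
end

section
/- Let X ~ P, and let μ*, μ̂ : X → ℝ be measurable, q*, q̂ ∈ ℝ, α ∈ (0,1], and a > 0. Define h*(x) = (1/α)1{μ*(x) ≥ q*} and ĥ(x) = (1/α)1{μ̂(x) ≥ q̂}. Then α E|ĥ(X) - h*(X)| ≤ a E|μ̂(X) - μ*(X)| + a|q̂ - q*| + P(μ̂(X) - q̂ ∈ [-1/a, 0]) + P(μ*(X) - q* ∈ [-1/a, 0]). -/
open MeasureTheory Filter Set

lemma pointwise_thr (a w1 w2 : ℝ) (ha : 0 < a) :
    |(if 0 ≤ w1 then (1:ℝ) else 0) - (if 0 ≤ w2 then (1:ℝ) else 0)|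
      ≤ a * |w1 - w2| + (if w1 ∈ Set.Icc (-1 / a) 0 then (1:ℝ) else 0)
        + (if w2 ∈ Set.Icc (-1 / a) 0 then (1:ℝ) else 0) := by
  have hpos : ∀ w1 w2 : ℝ, 0 ≤ w1 → w2 < 0 →
      (1:ℝ) ≤ a * |w1 - w2| + (if w1 ∈ Set.Icc (-1 / a) 0 then (1:ℝ) else 0)
        + (if w2 ∈ Set.Icc (-1 / a) 0 then (1:ℝ) else 0) := by
    intro w1 w2 h1 h2
    by_cases hB : w2 ∈ Set.Icc (-1 / a) 0
    · have : (0:ℝ) ≤ a * |w1 - w2| := by positivity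
      simp only [hB, if_true]
      split <;> linarith
    · have hlt : w2 < -1 / a := by
        rcases lt_or_ge w2 (-1/a) with h | h
        · exact h
        · exact absurd ⟨h, le_of_lt h2⟩ hB
      have h1a : 1 / a < w1 - w2 := by
        have : -(-1/a) = 1/a := by ring
        nlinarith
      have : 1 ≤ a * (w1 - w2) := by
        rw [div_lt_iff₀ ha] at h1a; nlinarith
      have habs : |w1 - w2| = w1 - w2 := abs_of_pos (by linarith [div_pos one_pos ha])
      rw [habs]
      have h0A : (0:ℝ) ≤ if w1 ∈ Set.Icc (-1 / a) 0 then (1:ℝ) else 0 := by positivity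
      have h0B : (0:ℝ) ≤ if w2 ∈ Set.Icc (-1 / a) 0 then (1:ℝ) else 0 := by positivity
      linarith
  by_cases h1 : 0 ≤ w1 <;> by_cases h2 : 0 ≤ w2
  · simp only [h1, h2, if_true, sub_self, abs_zero]; positivity
  · simp only [h1, h2, if_true, if_false, sub_zero, abs_one]
    exact hpos w1 w2 h1 (lt_of_not_ge h2)
  · simp only [h1, h2, if_true, if_false, zero_sub, abs_neg, abs_one]
    have := hpos w2 w1 h2 (lt_of_not_ge h1)
    rw [abs_sub_comm] at this; linarith
  · simp only [h1, h2, if_false, sub_self, abs_zero]; positivity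

/-- Quantitative L¹ bound on the difference of threshold functions
`h*(x) = (1/α)1{μ*(x) ≥ q*}` and `ĥ(x) = (1/α)1{μ̂(x) ≥ q̂}`, via the
`a`-Lipschitz surrogate indicator. -/
theorem stmt11
    {X : Type*} [MeasurableSpace X] (P : Measure X) [IsProbabilityMeasure P]
    (μs μh : X → ℝ) (hμs : Measurable μs) (hμh : Measurable μh)
    (qs qh : ℝ) (α : ℝ) (hα : α ∈ Set.Ioc (0:ℝ) 1) (a : ℝ) (ha : 0 < a)
    (hint : Integrable (fun x => |μh x - μs x|) P) :
    α * ∫ x, |α⁻¹ * (if qh ≤ μh x then (1:ℝ) else 0)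
        - α⁻¹ * (if qs ≤ μs x then (1:ℝ) else 0)| ∂P
      ≤ a * ∫ x, |μh x - μs x| ∂P + a * |qh - qs|
        + (P {x | μh x - qh ∈ Set.Icc (-1 / a) 0}).toReal
        + (P {x | μs x - qs ∈ Set.Icc (-1 / a) 0}).toReal := by
  obtain ⟨hα0, hα1⟩ := hα
  set A : Set X := {x | μh x - qh ∈ Set.Icc (-1 / a) 0} with hAdef
  set B : Set X := {x | μs x - qs ∈ Set.Icc (-1 / a) 0} with hBdef
  have hA : MeasurableSet A := (hμh.sub measurable_const) measurableSet_Icc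
  have hB : MeasurableSet B := (hμs.sub measurable_const) measurableSet_Icc
  -- simplify LHS integrand
  have hsimp : ∀ x, α * |α⁻¹ * (if qh ≤ μh x then (1:ℝ) else 0)
      - α⁻¹ * (if qs ≤ μs x then (1:ℝ) else 0)|
      = |(if qh ≤ μh x then (1:ℝ) else 0) - (if qs ≤ μs x then (1:ℝ) else 0)| := by
    intro x
    rw [← mul_sub, abs_mul, abs_of_pos (inv_pos.mpr hα0), ← mul_assoc,
      mul_inv_cancel₀ (ne_of_gt hα0), one_mul]
  rw [← integral_const_mul]
  simp_rw [hsimp]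
  -- pointwise bound
  have hpt : ∀ x, |(if qh ≤ μh x then (1:ℝ) else 0) - (if qs ≤ μs x then (1:ℝ) else 0)|
      ≤ a * |μh x - μs x| + a * |qh - qs|
        + A.indicator (fun _ => (1:ℝ)) x + B.indicator (fun _ => (1:ℝ)) x := by
    intro x
    have key := pointwise_thr a (μh x - qh) (μs x - qs) ha
    simp only [sub_nonneg] at key
    have htri : |μh x - qh - (μs x - qs)| ≤ |μh x - μs x| + |qh - qs| := by
      have : μh x - qh - (μs x - qs) = (μh x - μs x) - (qh - qs) := by ring
      rw [this]; exact abs_sub _ _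
    have hiA : A.indicator (fun _ => (1:ℝ)) x
        = (if μh x - qh ∈ Set.Icc (-1 / a) 0 then (1:ℝ) else 0) := by
      simp [Set.indicator, hAdef, Set.mem_setOf_eq]
    have hiB : B.indicator (fun _ => (1:ℝ)) x
        = (if μs x - qs ∈ Set.Icc (-1 / a) 0 then (1:ℝ) else 0) := by
      simp [Set.indicator, hBdef, Set.mem_setOf_eq]
    rw [hiA, hiB]
    nlinarith [mul_le_mul_of_nonneg_left htri ha.le]
  -- integrability
  have hintL : Integrable (fun x =>
      |(if qh ≤ μh x then (1:ℝ) else 0) - (if qs ≤ μs x then (1:ℝ) else 0)|) P := by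
    have hm : Measurable (fun x =>
        |(if qh ≤ μh x then (1:ℝ) else 0) - (if qs ≤ μs x then (1:ℝ) else 0)|) := by
      apply Measurable.abs
      exact ((measurable_const.ite (measurableSet_le measurable_const hμh)
        measurable_const).sub
        (measurable_const.ite (measurableSet_le measurable_const hμs) measurable_const))
    apply (integrable_const (2:ℝ)).mono' hm.aestronglyMeasurable
    filter_upwards with x
    rw [Real.norm_eq_abs, abs_abs]
    have : |(if qh ≤ μh x then (1:ℝ) else 0)| ≤ 1 := by split <;> simp
    have : |(if qs ≤ μs x then (1:ℝ) else 0)| ≤ 1 := by split <;> simp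
    calc |(if qh ≤ μh x then (1:ℝ) else 0) - (if qs ≤ μs x then (1:ℝ) else 0)|
        ≤ _ + _ := abs_sub _ _
      _ ≤ 2 := by split <;> split <;> norm_num
  have hintA : Integrable (fun x => A.indicator (fun _ => (1:ℝ)) x) P :=
    (integrable_const (1:ℝ)).indicator hA
  have hintB : Integrable (fun x => B.indicator (fun _ => (1:ℝ)) x) P :=
    (integrable_const (1:ℝ)).indicator hB
  have hint1 : Integrable (fun x => a * |μh x - μs x| + a * |qh - qs|) P :=
    (hint.const_mul a).add (integrable_const _)
  have hint2 : Integrable (fun x => a * |μh x - μs x| + a * |qh - qs|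
      + A.indicator (fun _ => (1:ℝ)) x) P := hint1.add hintA
  have hintR : Integrable (fun x => a * |μh x - μs x| + a * |qh - qs|
      + A.indicator (fun _ => (1:ℝ)) x + B.indicator (fun _ => (1:ℝ)) x) P :=
    hint2.add hintB
  have hle := integral_mono hintL hintR hpt
  calc ∫ x, |(if qh ≤ μh x then (1:ℝ) else 0) - (if qs ≤ μs x then (1:ℝ) else 0)| ∂P
      ≤ ∫ x, (a * |μh x - μs x| + a * |qh - qs|
        + A.indicator (fun _ => (1:ℝ)) x + B.indicator (fun _ => (1:ℝ)) x) ∂P := hle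
    _ = a * ∫ x, |μh x - μs x| ∂P + a * |qh - qs| + (P A).toReal + (P B).toReal := by
        rw [integral_add hint2 hintB, integral_add hint1 hintA,
          integral_add (hint.const_mul a) (integrable_const _),
          integral_const_mul, integral_const,
          integral_indicator_const (1:ℝ) hA, integral_indicator_const (1:ℝ) hB]
        simp [Measure.real]
end

section
/- Let ξ have CDF F differentiable at its (1-α)-quantile q with positive derivative f(q) > 0 and P(ξ = q) = 0, α ∈ (0,1). Let Δ : Ω → ℝ be bounded (‖Δ‖_∞ < ∞, E[Δ²] < ∞). Then the map t ↦ inf_η {(1/α)E[max(ξ + tΔ - η, 0)] + η} is differentiable at t = 0 with derivative (1/α)E[Δ · 1{ξ ≥ q}]. -/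
open MeasureTheory Filter Set Topology

set_option maxHeartbeats 1000000

/-- Gateaux differentiability of the CVaR functional in a bounded direction `Δ`:
the map `t ↦ inf_η {(1/α)E[(ξ + tΔ - η)₊] + η}` is differentiable at `t = 0`
with derivative `(1/α) E[Δ · 1{ξ ≥ q}]`. -/
theorem stmt17
    {Ω : Type*} [MeasurableSpace Ω] (P : Measure Ω) [IsProbabilityMeasure P]
    (ξ Δ : Ω → ℝ) (hξ : Measurable ξ) (hΔ : Measurable Δ)
    (hint : Integrable (fun ω => max (ξ ω) 0) P)
    (MΔ : ℝ) (hMΔ : ∀ ω, |Δ ω| ≤ MΔ)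
    (hΔ2 : Integrable (fun ω => (Δ ω) ^ 2) P)
    (α : ℝ) (hα : α ∈ Set.Ioo (0:ℝ) 1)
    (q : ℝ) (hq : q = sInf {t : ℝ | 1 - α ≤ (P {ω | ξ ω ≤ t}).toReal})
    (d : ℝ) (hd : 0 < d)
    (hderiv : HasDerivAt (fun t => (P {ω | ξ ω ≤ t}).toReal) d q)
    (hatom : P {ω | ξ ω = q} = 0) :
    HasDerivAt
      (fun t : ℝ => ⨅ η : ℝ, (α⁻¹ * ∫ ω, max (ξ ω + t * Δ ω - η) 0 ∂P + η))
      (α⁻¹ * ∫ ω in {ω | q ≤ ξ ω}, Δ ω ∂P) 0 := by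
  obtain ⟨hα0, hα1⟩ := hα
  have hαinv : (0:ℝ) < α⁻¹ := inv_pos.2 hα0
  have hne : Nonempty Ω := by
    by_contra h
    rw [not_nonempty_iff] at h
    have h1 : P univ = 1 := measure_univ
    rw [(Set.univ_eq_empty_iff).2 h, measure_empty] at h1
    exact zero_ne_one h1
  have hMΔ0 : 0 ≤ MΔ := le_trans (abs_nonneg _) (hMΔ (Classical.arbitrary Ω))
  -- integrability of all the hinge functions
  have hInt : ∀ t η : ℝ, Integrable (fun ω => max (ξ ω + t * Δ ω - η) 0) P := by
    intro t η
    have hm : Measurable fun ω => max (ξ ω + t * Δ ω - η) 0 :=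
      ((hξ.add (hΔ.const_mul t)).sub measurable_const).max measurable_const
    refine (hint.add (integrable_const (|t| * MΔ + |η|))).mono' hm.aestronglyMeasurable
      (Eventually.of_forall fun ω => ?_)
    have h2 : |t * Δ ω| ≤ |t| * MΔ := by
      rw [abs_mul]; exact mul_le_mul_of_nonneg_left (hMΔ ω) (abs_nonneg t)
    have h3 := abs_le.1 h2
    have h4 := le_abs_self η
    have h5 := neg_abs_le η
    have h6 := le_max_left (ξ ω) 0
    have h7 := le_max_right (ξ ω) 0
    rw [Real.norm_eq_abs, abs_of_nonneg (le_max_right _ _)]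
    apply max_le <;> simp only [Pi.add_apply] <;> linarith [h3.1, h3.2]
  have hInt0 : ∀ η : ℝ, Integrable (fun ω => max (ξ ω - η) 0) P := by
    intro η; have := hInt 0 η; simpa using this
  have hΔint : Integrable Δ P := by
    refine (integrable_const MΔ).mono' hΔ.aestronglyMeasurable (Eventually.of_forall fun ω => ?_)
    rw [Real.norm_eq_abs]; exact hMΔ ω
  -- the CDF
  set F : ℝ → ℝ := fun x => (P {ω | ξ ω ≤ x}).toReal with hF
  have hFcont : ContinuousAt F q := hderiv.continuousAt
  have hFmono : Monotone F := fun a b hab =>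
    ENNReal.toReal_mono (measure_ne_top P _) (measure_mono fun ω h => le_trans h hab)
  have hμ : IsProbabilityMeasure (P.map ξ) := Measure.isProbabilityMeasure_map hξ.aemeasurable
  have hFeq : F = fun x => ProbabilityTheory.cdf (P.map ξ) x := by
    funext x
    rw [ProbabilityTheory.cdf_eq_real, measureReal_def, Measure.map_apply hξ measurableSet_Iic]
    rfl
  have hFtop : Tendsto F atTop (𝓝 1) := by
    rw [hFeq]; exact ProbabilityTheory.tendsto_cdf_atTop _
  have hFbot : Tendsto F atBot (𝓝 0) := by
    rw [hFeq]; exact ProbabilityTheory.tendsto_cdf_atBot _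
  -- the quantile property : F q = 1 - α
  have hq' : q = sInf {t : ℝ | 1 - α ≤ F t} := hq
  have hFq : F q = 1 - α := by
    set S : Set ℝ := {t : ℝ | 1 - α ≤ F t} with hS
    have hSne : S.Nonempty := by
      have : ∀ᶠ t in atTop, 1 - α ≤ F t := hFtop.eventually_const_le (by linarith)
      obtain ⟨t, ht⟩ := this.exists
      exact ⟨t, ht⟩
    have hSbdd : BddBelow S := by
      have : ∀ᶠ t in atBot, F t < 1 - α := hFbot.eventually_lt_const (by linarith)
      obtain ⟨t₀, ht₀⟩ := this.exists
      refine ⟨t₀, fun s hs => ?_⟩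
      by_contra hc
      push_neg at hc
      exact absurd (le_trans hs (hFmono hc.le)) (not_le.mpr ht₀)
    have hub : ∀ ε > (0:ℝ), 1 - α ≤ F (q + ε) := by
      intro ε hε
      obtain ⟨s, hsS, hslt⟩ := (csInf_lt_iff hSbdd hSne).1
        (by rw [← hq']; linarith : sInf S < q + ε)
      exact le_trans hsS (hFmono hslt.le)
    have hlb : ∀ ε > (0:ℝ), F (q - ε) < 1 - α := by
      intro ε hε
      by_contra hc
      push_neg at hc
      have h := csInf_le hSbdd hc
      rw [← hq'] at h
      linarith
    have h1 : 1 - α ≤ F q := by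
      have hseq : Tendsto (fun n : ℕ => F (q + 1 / (n + 1))) atTop (𝓝 (F q)) := by
        refine hFcont.tendsto.comp ?_
        have : Tendsto (fun n : ℕ => q + 1 / ((n:ℝ) + 1)) atTop (𝓝 (q + 0)) :=
          tendsto_const_nhds.add tendsto_one_div_add_atTop_nhds_zero_nat
        simpa using this
      exact ge_of_tendsto hseq (Eventually.of_forall fun n => hub _ (by positivity))
    have h2 : F q ≤ 1 - α := by
      have hseq : Tendsto (fun n : ℕ => F (q - 1 / (n + 1))) atTop (𝓝 (F q)) := by
        refine hFcont.tendsto.comp ?_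
        have : Tendsto (fun n : ℕ => q - 1 / ((n:ℝ) + 1)) atTop (𝓝 (q - 0)) :=
          tendsto_const_nhds.sub tendsto_one_div_add_atTop_nhds_zero_nat
        simpa using this
      exact le_of_tendsto hseq (Eventually.of_forall fun n => (hlb _ (by positivity)).le)
    linarith
  -- tail probabilities at the quantile
  have hlt : P {ω | ξ ω < q} = P {ω | ξ ω ≤ q} := by
    refine le_antisymm (measure_mono fun ω (h : ξ ω < q) => (le_of_lt h : ξ ω ≤ q)) ?_
    have hcup : {ω | ξ ω ≤ q} ⊆ {ω | ξ ω < q} ∪ {ω | ξ ω = q} := by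
      intro ω h
      have h' : ξ ω ≤ q := h
      rcases lt_or_eq_of_le h' with h2 | h2
      · exact Or.inl h2
      · exact Or.inr h2
    calc P {ω | ξ ω ≤ q} ≤ P ({ω | ξ ω < q} ∪ {ω | ξ ω = q}) := measure_mono hcup
      _ ≤ P {ω | ξ ω < q} + P {ω | ξ ω = q} := measure_union_le _ _
      _ = P {ω | ξ ω < q} := by rw [hatom, add_zero]
  have hltR : (P {ω | ξ ω < q}).toReal = 1 - α := by rw [hlt]; exact hFq
  have hge : (P {ω | q ≤ ξ ω}).toReal = α := by
    have hc : {ω | q ≤ ξ ω} = {ω | ξ ω < q}ᶜ := by ext ω; simp [not_lt]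
    rw [hc, prob_compl_eq_one_sub (measurableSet_lt hξ measurable_const),
      ENNReal.toReal_sub_of_le prob_le_one ENNReal.one_ne_top, ENNReal.toReal_one, hltR]
    ring
  have hgt : (P {ω | q < ξ ω}).toReal = α := by
    have hc : {ω | q < ξ ω} = {ω | ξ ω ≤ q}ᶜ := by ext ω; simp [not_le]
    rw [hc, prob_compl_eq_one_sub (measurableSet_le hξ measurable_const),
      ENNReal.toReal_sub_of_le prob_le_one ENNReal.one_ne_top, ENNReal.toReal_one]
    have : (P {ω | ξ ω ≤ q}).toReal = 1 - α := hFq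
    rw [this]; ring
  -- the objective function
  set φ : ℝ → ℝ → ℝ := fun t η => α⁻¹ * ∫ ω, max (ξ ω + t * Δ ω - η) 0 ∂P + η with hφ
  have hφ0 : ∀ η, φ 0 η = α⁻¹ * ∫ ω, max (ξ ω - η) 0 ∂P + η := by
    intro η; simp only [hφ, zero_mul, add_zero]
  -- lower bound : the infimum is bounded below
  obtain ⟨c₀, hc₀⟩ : ∃ c₀ : ℝ, α < (P {ω | c₀ < ξ ω}).toReal := by
    have : ∀ᶠ t in atBot, F t < 1 - α := hFbot.eventually_lt_const (by linarith)
    obtain ⟨t₀, ht₀⟩ := this.exists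
    refine ⟨t₀, ?_⟩
    have hc : {ω | t₀ < ξ ω} = {ω | ξ ω ≤ t₀}ᶜ := by ext ω; simp [not_le]
    rw [hc, prob_compl_eq_one_sub (measurableSet_le hξ measurable_const),
      ENNReal.toReal_sub_of_le prob_le_one ENNReal.one_ne_top, ENNReal.toReal_one]
    have : F t₀ < 1 - α := ht₀
    simp only [hF] at this
    linarith
  have hlbφ : ∀ t η : ℝ, c₀ - |t| * MΔ ≤ φ t η := by
    intro t η
    set cc := c₀ - |t| * MΔ with hcc
    have hip : 0 ≤ α⁻¹ * ∫ ω, max (ξ ω + t * Δ ω - η) 0 ∂P :=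
      mul_nonneg hαinv.le (integral_nonneg fun ω => le_max_right _ _)
    rcases le_or_gt cc η with hcase | hcase
    · simp only [hφ]; linarith
    · set p := (P {ω | c₀ < ξ ω}).toReal with hp
      have hms : MeasurableSet {ω | c₀ < ξ ω} := measurableSet_lt measurable_const hξ
      have hlow : ∀ ω, ({ω | c₀ < ξ ω}).indicator (fun _ => cc - η) ω ≤
          max (ξ ω + t * Δ ω - η) 0 := by
        intro ω
        rcases em (ω ∈ {ω | c₀ < ξ ω}) with hmem | hmem
        · rw [Set.indicator_of_mem hmem]
          have h1 : c₀ < ξ ω := hmem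
          have hta : |t * Δ ω| ≤ |t| * MΔ := by
            rw [abs_mul]; exact mul_le_mul_of_nonneg_left (hMΔ ω) (abs_nonneg t)
          have h2 : -(|t| * MΔ) ≤ t * Δ ω := (abs_le.1 hta).1
          have : cc - η ≤ ξ ω + t * Δ ω - η := by simp only [hcc]; linarith
          exact le_trans this (le_max_left _ _)
        · rw [Set.indicator_of_notMem hmem]
          exact le_max_right _ _
      have hIndInt : Integrable (({ω | c₀ < ξ ω}).indicator (fun _ => cc - η)) P :=
        (integrable_const (cc - η)).indicator hms
      have hIe : ∫ ω, ({ω | c₀ < ξ ω}).indicator (fun _ => cc - η) ω ∂P = (cc - η) * p := by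
        rw [integral_indicator_const _ hms, measureReal_def, smul_eq_mul, hp, mul_comm]
      have hI : (cc - η) * p ≤ ∫ ω, max (ξ ω + t * Δ ω - η) 0 ∂P := by
        rw [← hIe]
        exact integral_mono hIndInt (hInt t η) hlow
      have h3 : α⁻¹ * ((cc - η) * p) + η ≤ α⁻¹ * ∫ ω, max (ξ ω + t * Δ ω - η) 0 ∂P + η := by
        have := mul_le_mul_of_nonneg_left hI hαinv.le
        linarith
      refine le_trans ?_ h3
      have h4 : 1 ≤ α⁻¹ * p := by
        rw [← div_eq_inv_mul, le_div_iff₀ hα0]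
        linarith
      have h5 : 0 < cc - η := by linarith
      nlinarith
  have hbdd : ∀ t : ℝ, BddBelow (Set.range fun η => φ t η) := by
    intro t
    exact ⟨c₀ - |t| * MΔ, by rintro x ⟨η, rfl⟩; exact hlbφ t η⟩
  set G : ℝ → ℝ := fun t => ⨅ η : ℝ, φ t η with hG
  -- q is a minimizer at t = 0
  have hmin : ∀ η : ℝ, φ 0 q ≤ φ 0 η := by
    intro η
    rw [hφ0, hφ0]
    rcases le_or_gt q η with hcase | hcase
    · have hms : MeasurableSet {ω | q < ξ ω} := measurableSet_lt measurable_const hξ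
      have hpt : ∀ ω, max (ξ ω - q) 0 ≤ max (ξ ω - η) 0 +
          ({ω | q < ξ ω}).indicator (fun _ => η - q) ω := by
        intro ω
        rcases em (ω ∈ {ω | q < ξ ω}) with hm | hm
        · rw [Set.indicator_of_mem hm]
          have h1 : q < ξ ω := hm
          apply max_le <;> linarith [le_max_left (ξ ω - η) (0:ℝ), le_max_right (ξ ω - η) (0:ℝ)]
        · rw [Set.indicator_of_notMem hm, add_zero]
          have h1 : ¬ q < ξ ω := hm
          push_neg at h1
          apply max_le
          · exact le_trans (by linarith) (le_max_right (ξ ω - η) 0)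
          · exact le_max_right _ _
      have hIint : Integrable (fun ω => max (ξ ω - η) 0 +
          ({ω | q < ξ ω}).indicator (fun _ => η - q) ω) P :=
        (hInt0 η).add ((integrable_const (η - q)).indicator hms)
      have hI := integral_mono (hInt0 q) hIint hpt
      rw [integral_add (hInt0 η) ((integrable_const (η - q)).indicator hms),
        integral_indicator_const _ hms, measureReal_def, smul_eq_mul, hgt] at hI
      have := mul_le_mul_of_nonneg_left hI hαinv.le
      have hainv : α⁻¹ * α = 1 := inv_mul_cancel₀ hα0.ne'
      nlinarith [this]
    · have hms : MeasurableSet {ω | q ≤ ξ ω} := measurableSet_le measurable_const hξ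
      have hpt : ∀ ω, max (ξ ω - q) 0 + ({ω | q ≤ ξ ω}).indicator (fun _ => q - η) ω ≤
          max (ξ ω - η) 0 := by
        intro ω
        rcases em (ω ∈ {ω | q ≤ ξ ω}) with hm | hm
        · rw [Set.indicator_of_mem hm]
          have h1 : q ≤ ξ ω := hm
          rw [max_eq_left (by linarith : (0:ℝ) ≤ ξ ω - q)]
          exact le_trans (by linarith) (le_max_left (ξ ω - η) 0)
        · rw [Set.indicator_of_notMem hm, add_zero]
          have h1 : ¬ q ≤ ξ ω := hm
          push_neg at h1
          rw [max_eq_right (by linarith : ξ ω - q ≤ 0)]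
          exact le_max_right _ _
      have hLint : Integrable (fun ω => max (ξ ω - q) 0 +
          ({ω | q ≤ ξ ω}).indicator (fun _ => q - η) ω) P :=
        (hInt0 q).add ((integrable_const (q - η)).indicator hms)
      have hI := integral_mono hLint (hInt0 η) hpt
      rw [integral_add (hInt0 q) ((integrable_const (q - η)).indicator hms),
        integral_indicator_const _ hms, measureReal_def, smul_eq_mul, hge] at hI
      have := mul_le_mul_of_nonneg_left hI hαinv.le
      have hainv : α⁻¹ * α = 1 := inv_mul_cancel₀ hα0.ne'
      nlinarith [this]
  have hG0 : G 0 = φ 0 q := le_antisymm (ciInf_le (hbdd 0) q) (le_ciInf hmin)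
  -- the candidate derivative
  have hms : MeasurableSet {ω | q ≤ ξ ω} := measurableSet_le measurable_const hξ
  set c : ℝ := α⁻¹ * ∫ ω in {ω | q ≤ ξ ω}, Δ ω ∂P with hcdef
  have hc' : c = α⁻¹ * ∫ ω, ({ω | q ≤ ξ ω}).indicator Δ ω ∂P := by
    rw [hcdef, integral_indicator hms]
  have hIndΔ : Integrable (({ω | q ≤ ξ ω}).indicator Δ) P := hΔint.indicator hms
  -- the error function and its bound
  set ψ : ℝ → ℝ := fun s => F (q + s) - F (q - 2*s) with hψ
  have hband : ∀ s : ℝ, 0 ≤ s → (P {ω | |ξ ω - q| ≤ s}).toReal ≤ ψ s := by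
    intro s hs
    rcases eq_or_lt_of_le hs with hs0 | hs0
    · have h1 : {ω | |ξ ω - q| ≤ s} = {ω | ξ ω = q} := by
        ext ω; simp [← hs0, abs_nonpos_iff, sub_eq_zero]
      have h2 : (P {ω | ξ ω ≤ q - 2*s}).toReal ≤ (P {ω | ξ ω ≤ q + s}).toReal := by
        apply ENNReal.toReal_mono (measure_ne_top P _)
        exact measure_mono fun ω h => by simp only [mem_setOf_eq] at *; linarith
      rw [h1, hatom]
      simpa [hψ, hF] using h2
    · have hsub : {ω | |ξ ω - q| ≤ s} ⊆ {ω | ξ ω ≤ q + s} \ {ω | ξ ω ≤ q - 2*s} := by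
        intro ω h
        have h' : |ξ ω - q| ≤ s := h
        have := abs_le.1 h'
        constructor
        · simp only [mem_setOf_eq]; linarith [this.2]
        · simp only [mem_setOf_eq, not_le]; linarith [this.1]
      have hmB : MeasurableSet {ω | ξ ω ≤ q - 2*s} := measurableSet_le hξ measurable_const
      have hBA : {ω | ξ ω ≤ q - 2*s} ⊆ {ω | ξ ω ≤ q + s} := fun ω h => by
        simp only [mem_setOf_eq] at *; linarith
      calc (P {ω | |ξ ω - q| ≤ s}).toReal
          ≤ (P ({ω | ξ ω ≤ q + s} \ {ω | ξ ω ≤ q - 2*s})).toReal :=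
            ENNReal.toReal_mono (measure_ne_top P _) (measure_mono hsub)
        _ = ψ s := by
            rw [measure_diff hBA hmB.nullMeasurableSet (measure_ne_top P _),
              ENNReal.toReal_sub_of_le (measure_mono hBA) (measure_ne_top P _)]
  have he : ∀ t : ℝ, |φ t q - φ 0 q - t * c| ≤ α⁻¹ * (2 * |t| * MΔ) * ψ (|t| * MΔ) := by
    intro t
    -- rewrite the error as α⁻¹ times an integral
    have hIndInt : Integrable (fun ω => t * ({ω | q ≤ ξ ω}).indicator Δ ω) P :=
      hIndΔ.const_mul t
    have hAB : Integrable (fun ω => max (ξ ω + t * Δ ω - q) 0 - max (ξ ω - q) 0) P :=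
      (hInt t q).sub (hInt0 q)
    have hrint : Integrable (fun ω => max (ξ ω + t * Δ ω - q) 0 - max (ξ ω - q) 0
        - t * ({ω | q ≤ ξ ω}).indicator Δ ω) P := hAB.sub hIndInt
    have hdiff : φ t q - φ 0 q - t * c = α⁻¹ * ∫ ω, (max (ξ ω + t * Δ ω - q) 0
        - max (ξ ω - q) 0 - t * ({ω | q ≤ ξ ω}).indicator Δ ω) ∂P := by
      rw [integral_sub hAB hIndInt,
        integral_sub (hInt t q) (hInt0 q), integral_const_mul, hφ0, hc']
      simp only [hφ]
      ring
    rw [hdiff, abs_mul, abs_of_pos hαinv, mul_assoc]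
    refine mul_le_mul_of_nonneg_left ?_ hαinv.le
    -- the integral bound
    have hbandms : MeasurableSet {ω | |ξ ω - q| ≤ |t| * MΔ} :=
      measurableSet_le ((hξ.sub measurable_const).abs) measurable_const
    have hpt : ∀ ω, |max (ξ ω + t * Δ ω - q) 0 - max (ξ ω - q) 0
        - t * ({ω | q ≤ ξ ω}).indicator Δ ω|
        ≤ ({ω | |ξ ω - q| ≤ |t| * MΔ}).indicator (fun _ => 2 * |t| * MΔ) ω := by
      intro ω
      have hta : |t * Δ ω| ≤ |t| * MΔ := by
        rw [abs_mul]; exact mul_le_mul_of_nonneg_left (hMΔ ω) (abs_nonneg t)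
      have h3 := abs_le.1 hta
      rcases em (ω ∈ {ω | |ξ ω - q| ≤ |t| * MΔ}) with hm | hm
      · rw [Set.indicator_of_mem hm]
        have h4 : |max (ξ ω + t * Δ ω - q) 0 - max (ξ ω - q) 0| ≤ |t| * MΔ := by
          have habs := abs_max_sub_max_le_abs (ξ ω + t * Δ ω - q) (ξ ω - q) 0
          have h5 : |(ξ ω + t * Δ ω - q) - (ξ ω - q)| = |t * Δ ω| := by ring_nf
          calc |max (ξ ω + t * Δ ω - q) 0 - max (ξ ω - q) 0|
              ≤ |(ξ ω + t * Δ ω - q) - (ξ ω - q)| := habs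
            _ = |t * Δ ω| := h5
            _ ≤ |t| * MΔ := hta
        have h6 : |t * ({ω | q ≤ ξ ω}).indicator Δ ω| ≤ |t| * MΔ := by
          rcases em (ω ∈ {ω | q ≤ ξ ω}) with hm2 | hm2
          · rw [Set.indicator_of_mem hm2]; exact hta
          · rw [Set.indicator_of_notMem hm2, mul_zero, abs_zero]
            exact mul_nonneg (abs_nonneg t) hMΔ0
        calc |max (ξ ω + t * Δ ω - q) 0 - max (ξ ω - q) 0
            - t * ({ω | q ≤ ξ ω}).indicator Δ ω|
            ≤ |max (ξ ω + t * Δ ω - q) 0 - max (ξ ω - q) 0|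
              + |t * ({ω | q ≤ ξ ω}).indicator Δ ω| := abs_sub _ _
          _ ≤ 2 * |t| * MΔ := by linarith
      · rw [Set.indicator_of_notMem hm]
        have h1 : ¬ |ξ ω - q| ≤ |t| * MΔ := hm
        push_neg at h1
        rcases le_or_gt q (ξ ω) with hcase | hcase
        · have h2 : |t| * MΔ < ξ ω - q := by
            rcases abs_cases (ξ ω - q) with ⟨he, _⟩ | ⟨he, hneg⟩
            · linarith [h1]
            · linarith [abs_nonneg (t * Δ ω), hta, h1]
          have hx1 : max (ξ ω + t * Δ ω - q) 0 = ξ ω + t * Δ ω - q :=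
            max_eq_left (by linarith [h3.1])
          have hx2 : max (ξ ω - q) 0 = ξ ω - q :=
            max_eq_left (by linarith [abs_nonneg (t * Δ ω)])
          have hmem : ω ∈ {ω | q ≤ ξ ω} := hcase
          rw [hx1, hx2, Set.indicator_of_mem hmem]
          have hz : ξ ω + t * Δ ω - q - (ξ ω - q) - t * Δ ω = 0 := by ring
          rw [hz, abs_zero]
        · have h2 : ξ ω - q < -(|t| * MΔ) := by
            rcases abs_cases (ξ ω - q) with ⟨he, _⟩ | ⟨he, hneg⟩
            · linarith [h1]
            · linarith [h1]
          have hx1 : max (ξ ω + t * Δ ω - q) 0 = 0 := max_eq_right (by linarith [h3.2])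
          have hx2 : max (ξ ω - q) 0 = 0 :=
            max_eq_right (by nlinarith [abs_nonneg t, abs_nonneg (t * Δ ω)])
          have hmem : ω ∉ {ω | q ≤ ξ ω} := by simpa using hcase.not_ge
          rw [hx1, hx2, Set.indicator_of_notMem hmem, mul_zero]
          simp
    have hbnd : |∫ ω, (max (ξ ω + t * Δ ω - q) 0 - max (ξ ω - q) 0
        - t * ({ω | q ≤ ξ ω}).indicator Δ ω) ∂P|
        ≤ 2 * |t| * MΔ * (P {ω | |ξ ω - q| ≤ |t| * MΔ}).toReal := by
      calc |∫ ω, (max (ξ ω + t * Δ ω - q) 0 - max (ξ ω - q) 0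
            - t * ({ω | q ≤ ξ ω}).indicator Δ ω) ∂P|
          ≤ ∫ ω, |max (ξ ω + t * Δ ω - q) 0 - max (ξ ω - q) 0
            - t * ({ω | q ≤ ξ ω}).indicator Δ ω| ∂P := by
            simpa [Real.norm_eq_abs] using norm_integral_le_integral_norm
              (fun ω => max (ξ ω + t * Δ ω - q) 0 - max (ξ ω - q) 0
                - t * ({ω | q ≤ ξ ω}).indicator Δ ω) (μ := P)
        _ ≤ ∫ ω, ({ω | |ξ ω - q| ≤ |t| * MΔ}).indicator (fun _ => 2 * |t| * MΔ) ω ∂P :=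
            integral_mono hrint.abs ((integrable_const _).indicator hbandms) hpt
        _ = 2 * |t| * MΔ * (P {ω | |ξ ω - q| ≤ |t| * MΔ}).toReal := by
            rw [integral_indicator_const _ hbandms, measureReal_def, smul_eq_mul, mul_comm]
    refine le_trans hbnd ?_
    have hcoef : (0:ℝ) ≤ 2 * |t| * MΔ := by positivity
    exact mul_le_mul_of_nonneg_left (hband _ (mul_nonneg (abs_nonneg t) hMΔ0)) hcoef
  -- midpoint convexity : 2 G 0 - G (-t) ≤ G t
  have hconv : ∀ t : ℝ, 2 * G 0 - G (-t) ≤ G t := by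
    intro t
    have hkey : ∀ η₁ η₂ : ℝ, 2 * G 0 ≤ φ t η₁ + φ (-t) η₂ := by
      intro η₁ η₂
      set m := (η₁ + η₂) / 2 with hm
      have hinf : G 0 ≤ φ 0 m := ciInf_le (hbdd 0) m
      have hpt : ∀ ω, 2 * max (ξ ω + 0 * Δ ω - m) 0
          ≤ max (ξ ω + t * Δ ω - η₁) 0 + max (ξ ω + (-t) * Δ ω - η₂) 0 := by
        intro ω
        have hsum : (ξ ω + t * Δ ω - η₁) + (ξ ω + (-t) * Δ ω - η₂)
            = 2 * (ξ ω + 0 * Δ ω - m) := by rw [hm]; ring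
        have h1 : max ((ξ ω + t * Δ ω - η₁) + (ξ ω + (-t) * Δ ω - η₂)) 0
            ≤ max (ξ ω + t * Δ ω - η₁) 0 + max (ξ ω + (-t) * Δ ω - η₂) 0 :=
          max_le (add_le_add (le_max_left _ _) (le_max_left _ _))
            (by positivity)
        have h2 : max (2 * (ξ ω + 0 * Δ ω - m)) 0 = 2 * max (ξ ω + 0 * Δ ω - m) 0 := by
          rcases le_total (ξ ω + 0 * Δ ω - m) 0 with hy | hy
          · rw [max_eq_right hy, max_eq_right (by linarith), mul_zero]
          · rw [max_eq_left hy, max_eq_left (by linarith)]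
        rw [hsum, h2] at h1
        exact h1
      have h2int : Integrable (fun ω => 2 * max (ξ ω + 0 * Δ ω - m) 0) P :=
        (hInt 0 m).const_mul 2
      have haddint : Integrable (fun ω => max (ξ ω + t * Δ ω - η₁) 0
          + max (ξ ω + (-t) * Δ ω - η₂) 0) P := (hInt t η₁).add (hInt (-t) η₂)
      have hI := integral_mono h2int haddint hpt
      rw [integral_add (hInt t η₁) (hInt (-t) η₂), integral_const_mul] at hI
      have := mul_le_mul_of_nonneg_left hI hαinv.le
      have h2 : 2 * φ 0 m ≤ φ t η₁ + φ (-t) η₂ := by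
        simp only [hφ] at this ⊢
        have h2m : 2 * m = η₁ + η₂ := by rw [hm]; ring
        nlinarith [this, h2m]
      linarith
    have step1 : ∀ η₂ : ℝ, 2 * G 0 - φ (-t) η₂ ≤ G t := by
      intro η₂
      exact le_ciInf fun η₁ => by linarith [hkey η₁ η₂]
    have step2 : 2 * G 0 - G t ≤ G (-t) :=
      le_ciInf fun η₂ => by linarith [step1 η₂]
    linarith
  -- upper bound : G t ≤ φ t q
  have hup : ∀ t : ℝ, G t ≤ G 0 + t * c + (φ t q - φ 0 q - t * c) := by
    intro t
    have h1 : G t ≤ φ t q := ciInf_le (hbdd t) q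
    rw [hG0]
    linarith
  -- put everything together
  have habs : ∀ t : ℝ, |G t - G 0 - t * c|
      ≤ |φ t q - φ 0 q - t * c| + |φ (-t) q - φ 0 q - (-t) * c| := by
    intro t
    have h1 := hup t
    have h2 := hup (-t)
    have h3 := hconv t
    have h4 := le_abs_self (φ t q - φ 0 q - t * c)
    have h5 := le_abs_self (φ (-t) q - φ 0 q - (-t) * c)
    have h6 := neg_abs_le (φ t q - φ 0 q - t * c)
    have h7 := neg_abs_le (φ (-t) q - φ 0 q - (-t) * c)
    rw [abs_le]
    constructor <;> linarith
  show HasDerivAt G c 0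
  rw [hasDerivAt_iff_isLittleO]
  simp only [sub_zero, smul_eq_mul]
  rw [Asymptotics.isLittleO_iff]
  intro ε hε
  -- the modulus tends to zero
  have hψ0 : Tendsto (fun t : ℝ => ψ (|t| * MΔ)) (𝓝 0) (𝓝 0) := by
    have hs : Tendsto (fun t : ℝ => |t| * MΔ) (𝓝 0) (𝓝 0) := by
      have := (continuous_abs.tendsto (0:ℝ)).mul_const MΔ
      simpa using this
    have h1 : Tendsto (fun s : ℝ => F (q + s)) (𝓝 0) (𝓝 (F q)) := by
      refine hFcont.tendsto.comp ?_
      have : Tendsto (fun s : ℝ => q + s) (𝓝 0) (𝓝 (q + 0)) :=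
        tendsto_const_nhds.add tendsto_id
      simpa using this
    have h2 : Tendsto (fun s : ℝ => F (q - 2*s)) (𝓝 0) (𝓝 (F q)) := by
      refine hFcont.tendsto.comp ?_
      have hcont2 : Continuous fun s : ℝ => q - 2*s := by continuity
      have := hcont2.tendsto 0
      simpa using this
    have h3 : Tendsto ψ (𝓝 0) (𝓝 0) := by
      have := h1.sub h2
      rw [sub_self] at this
      exact this
    exact h3.comp hs
  have hCt : Tendsto (fun t : ℝ => α⁻¹ * 2 * MΔ * (ψ (|t| * MΔ) + ψ (|t| * MΔ)))
      (𝓝 0) (𝓝 0) := by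
    have := (hψ0.add hψ0).const_mul (α⁻¹ * 2 * MΔ)
    simpa using this
  have hev : ∀ᶠ t : ℝ in 𝓝 0,
      α⁻¹ * 2 * MΔ * (ψ (|t| * MΔ) + ψ (|t| * MΔ)) < ε := hCt.eventually_lt_const hε
  filter_upwards [hev] with t ht
  have h1 := he t
  have h2 := he (-t)
  rw [abs_neg] at h2
  have h3 := habs t
  have hfac : |φ t q - φ 0 q - t * c| + |φ (-t) q - φ 0 q - (-t) * c|
      ≤ (α⁻¹ * 2 * MΔ * (ψ (|t| * MΔ) + ψ (|t| * MΔ))) * |t| := by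
    have : α⁻¹ * (2 * |t| * MΔ) * ψ (|t| * MΔ) + α⁻¹ * (2 * |t| * MΔ) * ψ (|t| * MΔ)
        = (α⁻¹ * 2 * MΔ * (ψ (|t| * MΔ) + ψ (|t| * MΔ))) * |t| := by ring
    linarith
  rw [Real.norm_eq_abs, Real.norm_eq_abs]
  calc |G t - G 0 - t * c| ≤ (α⁻¹ * 2 * MΔ * (ψ (|t| * MΔ) + ψ (|t| * MΔ))) * |t| := by
        linarith [h3, hfac]
    _ ≤ ε * |t| := mul_le_mul_of_nonneg_right ht.le (abs_nonneg t)
end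

section
/- Let T(Q) = inf_{η ∈ S} E_{Q}[f_η] where S ⊂ ℝ is compact, f_η is a family of functions with η ↦ E_Q[f_η] continuous on S for each Q, P_n → P in ℓ^∞(S) (as functionals η ↦ E[f_η]), and P has a unique minimizer η* in S. Suppose H_n → H uniformly on S with H continuous, r_n → ∞, and P_n + r_n^{-1}H_n remains in the admissible class. If additionally η ↦ P(η) is Lipschitz and every sequence of r_n^{-1}-approximate minimizers of P_n converges to η*, then r_n(T as applied: inf_{η∈S}(P_n + r_n^{-1}H_n)(η) - inf_{η∈S}P_n(η)) → H(η*). -/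
open Filter Set

/-- If a sequence in `S` has `Pl`-values converging to the minimum value and the
minimizer is unique, the sequence converges to the minimizer. -/
lemma min_conv18
    (S : Set ℝ) (hS : IsCompact S)
    (Pl : ℝ → ℝ) (hPlc : ContinuousOn Pl S)
    (ηstar : ℝ)
    (hmin : ∀ y ∈ S, Pl ηstar ≤ Pl y)
    (huniq : ∀ η ∈ S, (∀ y ∈ S, Pl η ≤ Pl y) → η = ηstar)
    (ξ : ℕ → ℝ) (hmem : ∀ n, ξ n ∈ S)
    (hval : Tendsto (fun n => Pl (ξ n)) atTop (nhds (Pl ηstar))) :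
    Tendsto ξ atTop (nhds ηstar) := by
  rw [Metric.tendsto_atTop]
  intro ε hε
  set K := S ∩ {x | ε ≤ dist x ηstar} with hK
  have hKcomp : IsCompact K :=
    hS.inter_right (isClosed_le continuous_const (continuous_id.dist continuous_const))
  by_cases hKne : K.Nonempty
  · obtain ⟨z, hzK, hzmin⟩ := hKcomp.exists_isMinOn hKne (hPlc.mono inter_subset_left)
    have hz_gt : Pl ηstar < Pl z := by
      rcases lt_or_ge (Pl ηstar) (Pl z) with h | h
      · exact h
      · exfalso
        have hzη : z = ηstar := huniq z hzK.1 (fun y hy => h.trans (hmin y hy))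
        have := hzK.2
        simp only [mem_setOf_eq, hzη, dist_self] at this
        linarith
    have hev : ∀ᶠ n in atTop, Pl (ξ n) < Pl z := hval (Iio_mem_nhds hz_gt)
    obtain ⟨N, hN⟩ := eventually_atTop.1 hev
    refine ⟨N, fun n hn => ?_⟩
    by_contra hcon
    push_neg at hcon
    have : ξ n ∈ K := ⟨hmem n, hcon⟩
    exact absurd (hN n hn) (not_lt.2 (hzmin this))
  · refine ⟨0, fun n _ => ?_⟩
    by_contra hcon
    push_neg at hcon
    exact hKne ⟨ξ n, hmem n, hcon⟩

/-- Approximate minimizers (relative to `Pn n ηstar`) with vanishing tolerance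
converge to the unique minimizer. -/
lemma approx_conv18
    (S : Set ℝ) (hS : IsCompact S)
    (Pn : ℕ → ℝ → ℝ) (Pl : ℝ → ℝ)
    (hPn : TendstoUniformlyOn Pn Pl atTop S) (hPlc : ContinuousOn Pl S)
    (ηstar : ℝ) (hηS : ηstar ∈ S)
    (hmin : ∀ y ∈ S, Pl ηstar ≤ Pl y)
    (huniq : ∀ η ∈ S, (∀ y ∈ S, Pl η ≤ Pl y) → η = ηstar)
    (ξ : ℕ → ℝ) (hmem : ∀ n, ξ n ∈ S)
    (δ : ℕ → ℝ) (hδ : Tendsto δ atTop (nhds 0))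
    (happ : ∀ᶠ n in atTop, Pn n (ξ n) ≤ Pn n ηstar + δ n) :
    Tendsto ξ atTop (nhds ηstar) := by
  apply min_conv18 S hS Pl hPlc ηstar hmin huniq ξ hmem
  rw [Metric.tendsto_atTop]
  intro ε hε
  have h1 : ∀ᶠ n in atTop, ∀ x ∈ S, dist (Pl x) (Pn n x) < ε / 4 :=
    (Metric.tendstoUniformlyOn_iff.1 hPn) (ε / 4) (by linarith)
  have h2 : ∀ᶠ n in atTop, |δ n| < ε / 4 := by
    have := (Metric.tendsto_atTop.1 hδ) (ε / 4) (by linarith)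
    obtain ⟨N, hN⟩ := this
    exact eventually_atTop.2 ⟨N, fun n hn => by simpa [Real.dist_eq] using hN n hn⟩
  obtain ⟨N, hN⟩ := eventually_atTop.1 (h1.and (h2.and happ))
  refine ⟨N, fun n hn => ?_⟩
  obtain ⟨hd, hδn, hb⟩ := hN n hn
  have d1 := hd (ξ n) (hmem n)
  have d2 := hd ηstar hηS
  rw [Real.dist_eq] at d1 d2 ⊢
  have hlow : Pl ηstar ≤ Pl (ξ n) := hmin _ (hmem n)
  have ha1 : Pl (ξ n) - Pn n (ξ n) < ε / 4 := by cases abs_lt.1 d1; linarith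
  have ha1' : Pn n (ξ n) - Pl (ξ n) < ε / 4 := by cases abs_lt.1 d1; linarith
  have ha2 : Pn n ηstar - Pl ηstar < ε / 4 := by cases abs_lt.1 d2; linarith
  have hδ' : δ n < ε / 4 := (le_abs_self _).trans_lt hδn
  rw [abs_lt]
  constructor <;> nlinarith

/-- Uniform Hadamard differentiability of the infimum functional over a compact
set (abstract form of Lemma danskin): if `P_n → P` uniformly on `S`, `H_n → H`
uniformly on `S` with `H` continuous, `P` is Lipschitz on `S` with unique
minimizer `η*` on `S`, and every sequence of `r_n⁻¹`-approximate minimizers of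
`P_n` converges to `η*`, then
`r_n (inf_S (P_n + r_n⁻¹ H_n) - inf_S P_n) → H(η*)`. -/
theorem stmt18
    (S : Set ℝ) (hS : IsCompact S) (hSne : S.Nonempty)
    (Pn : ℕ → ℝ → ℝ) (Pl : ℝ → ℝ) (Hn : ℕ → ℝ → ℝ) (H : ℝ → ℝ)
    (hPcont : ∀ n, ContinuousOn (Pn n) S)
    (hPn : TendstoUniformlyOn Pn Pl atTop S)
    (hHn : TendstoUniformlyOn Hn H atTop S)
    (hHcont : ContinuousOn H S)
    (r : ℕ → ℝ) (hrpos : ∀ n, 0 < r n) (hr : Tendsto r atTop atTop)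
    (L : ℝ) (hLip : ∀ η ∈ S, ∀ η' ∈ S, |Pl η - Pl η'| ≤ L * |η - η'|)
    (ηstar : ℝ) (hηS : ηstar ∈ S)
    (hmin : ∀ y ∈ S, Pl ηstar ≤ Pl y)
    (huniq : ∀ η ∈ S, (∀ y ∈ S, Pl η ≤ Pl y) → η = ηstar)
    (happrox : ∀ η : ℕ → ℝ,
      (∀ n, η n ∈ S ∧ Pn n (η n) ≤ sInf (Pn n '' S) + (r n)⁻¹) →
      Tendsto η atTop (nhds ηstar)) :
    Tendsto
      (fun n => r n *
        (sInf ((fun η => Pn n η + (r n)⁻¹ * Hn n η) '' S) - sInf (Pn n '' S)))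
      atTop (nhds (H ηstar)) := by
  have hPlc : ContinuousOn Pl S := hPn.continuousOn (Eventually.of_forall hPcont).frequently
  -- bound on H
  obtain ⟨M0, hM0⟩ := hS.exists_bound_of_continuousOn hHcont
  set M : ℝ := |M0| + 1 with hM
  have hMpos : 0 < M := by positivity
  have hHbd : ∀ᶠ n in atTop, ∀ x ∈ S, |Hn n x| ≤ M := by
    filter_upwards [(Metric.tendstoUniformlyOn_iff.1 hHn) 1 one_pos] with n hn x hx
    have := hn x hx
    rw [Real.dist_eq] at this
    have h0 := hM0 x hx
    rw [Real.norm_eq_abs] at h0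
    have := abs_lt.1 this
    rw [hM]
    cases abs_le.1 h0 with
    | intro h1 h2 => rw [abs_le]; constructor <;> [skip; skip] <;> cases this <;>
        nlinarith [le_abs_self M0, neg_abs_le M0]
  -- abbreviations
  set G : ℕ → ℝ → ℝ := fun n x => Pn n x + (r n)⁻¹ * Hn n x with hG
  set A : ℕ → ℝ := fun n => sInf (G n '' S) with hA
  set B : ℕ → ℝ := fun n => sInf (Pn n '' S) with hB
  have hrne : ∀ n, r n ≠ 0 := fun n => (hrpos n).ne'
  have hrinv : Tendsto (fun n => (r n)⁻¹) atTop (nhds 0) := hr.inv_tendsto_atTop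
  -- exact minimizers of Pn n
  have hex : ∀ n, ∃ x, x ∈ S ∧ ∀ y ∈ S, Pn n x ≤ Pn n y := by
    intro n
    obtain ⟨x, hx, hxm⟩ := hS.exists_isMinOn hSne (hPcont n)
    exact ⟨x, hx, fun y hy => hxm hy⟩
  choose e he hemin using hex
  have hBe : ∀ n, B n = Pn n (e n) := by
    intro n
    refine IsLeast.csInf_eq ⟨mem_image_of_mem _ (he n), ?_⟩
    rintro b ⟨y, hy, rfl⟩
    exact hemin n y hy
  -- approximate minimizers of G n
  have hzex : ∀ n, ∃ x, x ∈ S ∧ G n x < A n + (r n)⁻¹ * (r n)⁻¹ := by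
    intro n
    obtain ⟨a, ⟨x, hx, rfl⟩, ha⟩ :=
      Real.lt_sInf_add_pos (hSne.image (G n))
        (mul_pos (inv_pos.2 (hrpos n)) (inv_pos.2 (hrpos n)))
    exact ⟨x, hx, ha⟩
  choose z hz hzval using hzex
  -- eventually bddBelow of G image and A n ≤ G n x for x ∈ S
  have hAle : ∀ᶠ n in atTop, ∀ x ∈ S, A n ≤ G n x := by
    filter_upwards [hHbd] with n hn x hx
    refine csInf_le ⟨B n - (r n)⁻¹ * M, ?_⟩ (mem_image_of_mem _ hx)
    rintro b ⟨y, hy, rfl⟩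
    have h1 : Pn n (e n) ≤ Pn n y := hemin n y hy
    have h2 : -M ≤ Hn n y := (abs_le.1 (hn y hy)).1
    have h3 : (0:ℝ) < (r n)⁻¹ := inv_pos.2 (hrpos n)
    rw [hBe n]
    have := mul_le_mul_of_nonneg_left h2 h3.le
    simp only [hG]
    nlinarith
  have hBle : ∀ n, ∀ x ∈ S, B n ≤ Pn n x := fun n x hx => (hBe n) ▸ hemin n x hx
  -- key bounds
  have hupper : ∀ᶠ n in atTop, r n * (A n - B n) ≤ Hn n (e n) := by
    filter_upwards [hAle] with n hn
    have h1 : A n ≤ Pn n (e n) + (r n)⁻¹ * Hn n (e n) := hn (e n) (he n)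
    have h2 : r n * (r n)⁻¹ = 1 := mul_inv_cancel₀ (hrne n)
    have h3 : 0 < r n := hrpos n
    rw [hBe n]
    have h4 : A n - Pn n (e n) ≤ (r n)⁻¹ * Hn n (e n) := by linarith
    calc r n * (A n - Pn n (e n)) ≤ r n * ((r n)⁻¹ * Hn n (e n)) :=
          mul_le_mul_of_nonneg_left h4 h3.le
      _ = Hn n (e n) := by field_simp
  have hlower : ∀ᶠ n in atTop, Hn n (z n) - (r n)⁻¹ ≤ r n * (A n - B n) := by
    filter_upwards [] with n
    have h1 : Pn n (z n) + (r n)⁻¹ * Hn n (z n) < A n + (r n)⁻¹ * (r n)⁻¹ := hzval n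
    have h2 : B n ≤ Pn n (z n) := hBle n (z n) (hz n)
    have h3 : r n * (r n)⁻¹ = 1 := mul_inv_cancel₀ (hrne n)
    have h4 : 0 < r n := hrpos n
    have h5 : (0:ℝ) < (r n)⁻¹ := inv_pos.2 (hrpos n)
    have hexp : (r n)⁻¹ * (Hn n (z n) - (r n)⁻¹)
        = (r n)⁻¹ * Hn n (z n) - (r n)⁻¹ * (r n)⁻¹ := by ring
    have h6 : (r n)⁻¹ * (Hn n (z n) - (r n)⁻¹) ≤ A n - B n := by
      rw [hexp]; linarith
    calc Hn n (z n) - (r n)⁻¹ = r n * ((r n)⁻¹ * (Hn n (z n) - (r n)⁻¹)) := by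
          field_simp
      _ ≤ r n * (A n - B n) := mul_le_mul_of_nonneg_left h6 h4.le
  -- e n → ηstar
  have he_conv : Tendsto e atTop (nhds ηstar) := by
    refine approx_conv18 S hS Pn Pl hPn hPlc ηstar hηS hmin huniq e he
      (fun _ => 0) tendsto_const_nhds ?_
    filter_upwards [] with n
    have := hemin n ηstar hηS
    linarith
  -- z n → ηstar
  have hz_conv : Tendsto z atTop (nhds ηstar) := by
    refine approx_conv18 S hS Pn Pl hPn hPlc ηstar hηS hmin huniq z hz
      (fun n => 2 * M * (r n)⁻¹ + (r n)⁻¹ * (r n)⁻¹) ?_ ?_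
    · have : Tendsto (fun n => 2 * M * (r n)⁻¹ + (r n)⁻¹ * (r n)⁻¹) atTop
          (nhds (2 * M * 0 + 0 * 0)) :=
        ((tendsto_const_nhds.mul hrinv).add (hrinv.mul hrinv))
      simpa using this
    · filter_upwards [hAle, hHbd] with n hn hb
      have h1 : Pn n (z n) + (r n)⁻¹ * Hn n (z n) < A n + (r n)⁻¹ * (r n)⁻¹ := hzval n
      have h2 : A n ≤ Pn n ηstar + (r n)⁻¹ * Hn n ηstar := hn ηstar hηS
      have h3 : |Hn n (z n)| ≤ M := hb (z n) (hz n)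
      have h4 : |Hn n ηstar| ≤ M := hb ηstar hηS
      have h5 : (0:ℝ) < (r n)⁻¹ := inv_pos.2 (hrpos n)
      have h6 := abs_le.1 h3
      have h7 := abs_le.1 h4
      nlinarith [mul_le_mul_of_nonneg_left h7.2 h5.le,
        mul_le_mul_of_nonneg_left h6.1 h5.le]
  -- Hn n (e n) → H ηstar, Hn n (z n) → H ηstar
  have hcompe : Tendsto (fun n => Hn n (e n)) atTop (nhds (H ηstar)) :=
    hHn.tendsto_comp (hHcont ηstar hηS)
      (tendsto_nhdsWithin_iff.2 ⟨he_conv, Eventually.of_forall he⟩)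
  have hcompz : Tendsto (fun n => Hn n (z n)) atTop (nhds (H ηstar)) :=
    hHn.tendsto_comp (hHcont ηstar hηS)
      (tendsto_nhdsWithin_iff.2 ⟨hz_conv, Eventually.of_forall hz⟩)
  have hlowconv : Tendsto (fun n => Hn n (z n) - (r n)⁻¹) atTop (nhds (H ηstar)) := by
    have := hcompz.sub hrinv
    simpa using this
  exact tendsto_of_tendsto_of_tendsto_of_le_of_le' hlowconv hcompe hlower hupper
end
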